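/- arXiv:2306.11237 — 6 statements merged into one kernel-verified Lean document; each statement's English description precedes it below -/
import Mathlib

section
/- Let ρ_{AB} be a density operator, 𝒢 the twirling channel for a finite group G acting via (U_g ⊗ I), and ℬ a measurement channel on B. Suppose ρ_{AB} = √(𝒢(ρ_{AB})) · (√(𝒢∘ℬ(ρ_{AB})))^{-1} · ℬ(ρ_{AB}) · (√(𝒢∘ℬ(ρ_{AB})))^{-1} · √(𝒢(ρ_{AB})) as operators on the support of 𝒢∘ℬ(ρ_{AB}) (pseudoinverses taken on that support). Then there exists a completely positive trace-preserving map Γ such that Γ(ℬ(U_g ρ_{AB} U_g†)) = U_g ρ_{AB} U_g† for all g ∈ G, where U_g abbreviates U_g ⊗ I. -/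
open scoped Matrix Kronecker ComplexOrder
open Matrix

namespace DenseCoding

variable {n : Type*}

/-- Spectral functional calculus of a Hermitian matrix (0 on non-Hermitian input). -/
noncomputable def funCalc [Fintype n] [DecidableEq n] (f : ℝ → ℝ) (A : Matrix n n ℂ) :
    Matrix n n ℂ :=
  if hA : A.IsHermitian then
    (hA.eigenvectorUnitary : Matrix n n ℂ) *
      Matrix.diagonal (fun i => (f (hA.eigenvalues i) : ℂ)) *
      (star (hA.eigenvectorUnitary : Matrix n n ℂ))
  else 0

/-- Matrix logarithm (via the spectral decomposition). -/
noncomputable def mLog [Fintype n] [DecidableEq n] (A : Matrix n n ℂ) : Matrix n n ℂ :=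
  funCalc Real.log A

/-- Matrix square root (via the spectral decomposition). -/
noncomputable def mSqrt [Fintype n] [DecidableEq n] (A : Matrix n n ℂ) : Matrix n n ℂ :=
  funCalc Real.sqrt A

/-- Pseudo-inverse of the square root, taken on the support. -/
noncomputable def mPinvSqrt [Fintype n] [DecidableEq n] (A : Matrix n n ℂ) : Matrix n n ℂ :=
  funCalc (fun x => if x = 0 then 0 else 1 / Real.sqrt x) A

/-- von Neumann entropy H(A) = -Tr A log A, via eigenvalues. -/
noncomputable def vnEntropy [Fintype n] [DecidableEq n] (A : Matrix n n ℂ) : ℝ :=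
  if hA : A.IsHermitian then -∑ i, hA.eigenvalues i * Real.log (hA.eigenvalues i) else 0

/-- Quantum relative entropy D(ρ‖σ) = Tr ρ (log ρ - log σ). -/
noncomputable def relEntropy [Fintype n] [DecidableEq n] (ρ σ : Matrix n n ℂ) : ℝ :=
  ((ρ * (mLog ρ - mLog σ)).trace).re

/-- Density operator: positive semidefinite with unit trace. -/
def IsDensity [Fintype n] (ρ : Matrix n n ℂ) : Prop := ρ.PosSemidef ∧ ρ.trace = 1

/-- Projective unitary representation: each U g is unitary and
    U g * U g' = c(g,g') • U (g g') for unit complex numbers c(g,g'). -/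
def IsProjUnitaryRep {G : Type*} [Group G] [Fintype n] [DecidableEq n]
    (U : G → Matrix n n ℂ) : Prop :=
  (∀ g, U g ∈ Matrix.unitaryGroup n ℂ) ∧
    ∀ g g', ∃ c : ℂ, ‖c‖ = 1 ∧ U g * U g' = c • U (g * g')

/-- The group twirling channel 𝒢(ρ) = (1/|G|) Σ_g (U_g ⊗ I) ρ (U_g ⊗ I)†. -/
noncomputable def twirl {G a b : Type*} [Fintype G] [Fintype a] [Fintype b] [DecidableEq b]
    (U : G → Matrix a a ℂ) (ρ : Matrix (a × b) (a × b) ℂ) : Matrix (a × b) (a × b) ℂ :=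
  (Fintype.card G : ℂ)⁻¹ •
    ∑ g, (U g ⊗ₖ (1 : Matrix b b ℂ)) * ρ * (U g ⊗ₖ (1 : Matrix b b ℂ))ᴴ

/-- Rank-one outer product |x⟩⟨x|. -/
def outer {b : Type*} (x : b → ℂ) : Matrix b b ℂ := Matrix.vecMulVec x (star x)

/-- Measurement channel on B in the (orthonormal) family e:
    ℬ(ρ) = Σ_k (I ⊗ |e_k⟩⟨e_k|) ρ (I ⊗ |e_k⟩⟨e_k|). -/
noncomputable def meas {a b ι : Type*} [Fintype a] [Fintype b] [Fintype ι] [DecidableEq a]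
    (e : ι → b → ℂ) (ρ : Matrix (a × b) (a × b) ℂ) : Matrix (a × b) (a × b) ℂ :=
  ∑ k, ((1 : Matrix a a ℂ) ⊗ₖ outer (e k)) * ρ * ((1 : Matrix a a ℂ) ⊗ₖ outer (e k))

/-- A family of vectors is orthonormal. -/
def OrthoFam {ι b : Type*} [Fintype b] [DecidableEq ι] (e : ι → b → ℂ) : Prop :=
  ∀ k k', ∑ i, star (e k i) * e k' i = if k = k' then 1 else 0

/-- Completely positive trace-preserving map, via a Kraus representation. -/
def IsCPTP {n m : Type*} [Fintype n] [Fintype m] [DecidableEq n] [DecidableEq m] (Γ : Matrix n n ℂ → Matrix m m ℂ) : Prop :=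
  ∃ (N : ℕ) (K : Fin N → Matrix m n ℂ),
    (∀ ρ, Γ ρ = ∑ t, K t * ρ * (K t)ᴴ) ∧ (∑ t, (K t)ᴴ * K t = 1)

/-- Gram matrix J(V)_{λη} = ⟨v_λ|v_η⟩ of a family of vectors. -/
noncomputable def gram {l β : Type*} [Fintype β] (v : l → β → ℂ) : Matrix l l ℂ :=
  Matrix.of fun i j => ∑ k, v i k * star (v j k)

/-- The maximally coherent state projector |+⟩⟨+| on C^l. -/
noncomputable def plusMat (l : ℕ) : Matrix (Fin l) (Fin l) ℂ := Matrix.of fun _ _ => (l : ℂ)⁻¹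

/-- Incoherent (diagonal) unitary Z_k = Σ_λ e^{iθ_{λ,k}}|λ⟩⟨λ|. -/
noncomputable def diagPhase {l κ : Type*} [DecidableEq l] (θ : l → κ → ℝ) (k : κ) :
    Matrix l l ℂ :=
  Matrix.diagonal fun i => Complex.exp (Complex.I * θ i k)

/-- Shannon entropy of a distribution. -/
noncomputable def shannonEntropy {ι : Type*} [Fintype ι] (P : ι → ℝ) : ℝ :=
  -∑ i, P i * Real.log (P i)


/-- The phase e^{2πi x / l}. -/
noncomputable def phase (l : ℕ) (x : ℤ) : ℂ :=
  Complex.exp (((2 * Real.pi * x / l : ℝ) : ℂ) * Complex.I)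



section Aux

variable {m : Type*} [Fintype m] [DecidableEq m] {A B : Matrix m m ℂ} {f g : ℝ → ℝ}

private lemma conj_mul_conj (V X Y : Matrix m m ℂ) (hV2 : star V * V = 1) :
    (V * X * star V) * (V * Y * star V) = V * (X * Y) * star V := by
  simp only [← Matrix.mul_assoc]
  rw [Matrix.mul_assoc (V * X) (star V) V, hV2, Matrix.mul_one, Matrix.mul_assoc V X Y]

private lemma conj_mul_conj' (V X Y : Matrix m m ℂ) (hV1 : V * star V = 1) :
    (star V * X * V) * (star V * Y * V) = star V * (X * Y) * V := by
  simp only [← Matrix.mul_assoc]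
  rw [Matrix.mul_assoc (star V * X) V (star V), hV1, Matrix.mul_one,
    Matrix.mul_assoc (star V) X Y]

private lemma fc_eq (hA : A.IsHermitian) (f : ℝ → ℝ) :
    funCalc f A = (hA.eigenvectorUnitary : Matrix m m ℂ) *
      Matrix.diagonal (fun i => (f (hA.eigenvalues i) : ℂ)) *
      (star (hA.eigenvectorUnitary : Matrix m m ℂ)) := dif_pos hA

private lemma fc_herm (hA : A.IsHermitian) (f : ℝ → ℝ) : (funCalc f A).IsHermitian := by
  rw [fc_eq hA f, Matrix.star_eq_conjTranspose]
  apply Matrix.isHermitian_mul_mul_conjTranspose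
  unfold Matrix.IsHermitian
  rw [diagonal_conjTranspose]
  have : (star fun i => (f (hA.eigenvalues i) : ℂ)) = fun i => (f (hA.eigenvalues i) : ℂ) :=
    funext fun i => Complex.conj_ofReal _
  rw [this]

private lemma fc_mul (hA : A.IsHermitian) (f g : ℝ → ℝ) :
    funCalc f A * funCalc g A = funCalc (fun x => f x * g x) A := by
  have hV2 : (star (hA.eigenvectorUnitary : Matrix m m ℂ)) * (hA.eigenvectorUnitary : Matrix m m ℂ) = 1 :=
    Matrix.mem_unitaryGroup_iff'.mp (hA.eigenvectorUnitary).2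
  rw [fc_eq hA f, fc_eq hA g, fc_eq hA (fun x => f x * g x), conj_mul_conj _ _ _ hV2,
    diagonal_mul_diagonal]
  congr 1
  congr 1
  funext i
  push_cast
  ring

private lemma fc_add (hA : A.IsHermitian) (f g : ℝ → ℝ) :
    funCalc f A + funCalc g A = funCalc (fun x => f x + g x) A := by
  rw [fc_eq hA f, fc_eq hA g, fc_eq hA (fun x => f x + g x), ← Matrix.add_mul, ← Matrix.mul_add,
    diagonal_add]
  congr 2
  funext i
  push_cast
  ring

private lemma fc_one (hA : A.IsHermitian) : funCalc (fun _ => (1:ℝ)) A = 1 := by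
  have hV1 : (hA.eigenvectorUnitary : Matrix m m ℂ) * (star (hA.eigenvectorUnitary : Matrix m m ℂ)) = 1 :=
    Matrix.mem_unitaryGroup_iff.mp (hA.eigenvectorUnitary).2
  rw [fc_eq hA]
  simp [diagonal_one, hV1]

private lemma fc_zero (hA : A.IsHermitian) : funCalc (fun _ => (0:ℝ)) A = 0 := by
  rw [fc_eq hA]
  simp

private lemma fc_id (hA : A.IsHermitian) : funCalc (fun x => x) A = A := by
  rw [fc_eq hA]
  exact (hA.spectral_theorem).symm

private lemma fc_congr (hA : A.IsHermitian)
    (h : ∀ i, f (hA.eigenvalues i) = g (hA.eigenvalues i)) :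
    funCalc f A = funCalc g A := by
  rw [fc_eq hA f, fc_eq hA g]
  have : (fun i => (f (hA.eigenvalues i) : ℂ)) = fun i => (g (hA.eigenvalues i) : ℂ) :=
    funext fun i => by rw [h i]
  rw [this]

private lemma fc_comm (hA : A.IsHermitian) (f : ℝ → ℝ) (hBA : B * A = A * B) :
    B * funCalc f A = funCalc f A * B := by
  set V : Matrix m m ℂ := (hA.eigenvectorUnitary : Matrix m m ℂ) with hVdef
  have hV1 : V * star V = 1 := Matrix.mem_unitaryGroup_iff.mp (hA.eigenvectorUnitary).2
  have hV2 : star V * V = 1 := Matrix.mem_unitaryGroup_iff'.mp (hA.eigenvectorUnitary).2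
  set B' : Matrix m m ℂ := star V * B * V with hB'def
  set d : m → ℂ := fun i => ((hA.eigenvalues i : ℝ) : ℂ) with hddef
  have hAs : A = V * Matrix.diagonal d * star V := hA.spectral_theorem
  have hD : Matrix.diagonal d = star V * A * V := by
    rw [hAs]
    simp only [Matrix.mul_assoc]
    rw [hV2, Matrix.mul_one, ← Matrix.mul_assoc, hV2, Matrix.one_mul]
  have hBD : B' * Matrix.diagonal d = Matrix.diagonal d * B' := by
    rw [hD, hB'def, conj_mul_conj' _ _ _ hV1, conj_mul_conj' _ _ _ hV1, hBA]
  have hBDf : B' * Matrix.diagonal (fun i => (f (hA.eigenvalues i) : ℂ)) =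
      Matrix.diagonal (fun i => (f (hA.eigenvalues i) : ℂ)) * B' := by
    ext i j
    rw [Matrix.mul_diagonal, Matrix.diagonal_mul]
    by_cases hb : B' i j = 0
    · rw [hb, mul_zero, zero_mul]
    · have h2 := Matrix.ext_iff.2 hBD i j
      rw [Matrix.mul_diagonal, Matrix.diagonal_mul] at h2
      rw [mul_comm (d i)] at h2
      have hd : d j = d i := mul_left_cancel₀ hb h2
      have heig : hA.eigenvalues j = hA.eigenvalues i := by
        simp only [hddef] at hd
        exact_mod_cast hd
      rw [heig, mul_comm]
  have hB : V * B' * star V = B := by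
    rw [hB'def]
    simp only [← Matrix.mul_assoc]
    rw [hV1, Matrix.one_mul, Matrix.mul_assoc B V (star V), hV1, Matrix.mul_one]
  rw [fc_eq hA f]
  conv_lhs => rw [← hB]
  conv_rhs => rw [← hB]
  rw [← hVdef, conj_mul_conj _ _ _ hV2, conj_mul_conj _ _ _ hV2, hBDf]

private lemma sum_mulVec' {ι : Type*} [Fintype ι] (M : ι → Matrix m m ℂ) (x : m → ℂ) :
    (∑ i, M i) *ᵥ x = ∑ i, M i *ᵥ x := by
  ext j
  simp only [Matrix.mulVec, dotProduct, Finset.sum_apply, Finset.sum_apply',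
    Matrix.sum_apply, Finset.sum_mul]
  rw [Finset.sum_comm]

private lemma dotProduct_sum' {ι : Type*} [Fintype ι] (v : m → ℂ) (w : ι → m → ℂ) :
    v ⬝ᵥ (∑ i, w i) = ∑ i, v ⬝ᵥ w i := by
  simp only [dotProduct, Finset.sum_apply, Finset.mul_sum]
  rw [Finset.sum_comm]

private lemma psd_sum {ι : Type*} [Fintype ι] (M : ι → Matrix m m ℂ)
    (h : ∀ i, (M i).PosSemidef) : (∑ i, M i).PosSemidef := by
  refine Matrix.PosSemidef.of_dotProduct_mulVec_nonneg ?_ ?_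
  · unfold Matrix.IsHermitian
    rw [conjTranspose_sum]
    exact Finset.sum_congr rfl fun i _ => (h i).1
  · intro x
    rw [sum_mulVec', dotProduct_sum']
    exact Finset.sum_nonneg fun i _ => (h i).dotProduct_mulVec_nonneg x

private lemma psd_smul {c : ℂ} (hc : 0 ≤ c) {M : Matrix m m ℂ} (hM : M.PosSemidef) :
    (c • M).PosSemidef := by
  refine Matrix.PosSemidef.of_dotProduct_mulVec_nonneg ?_ ?_
  · unfold Matrix.IsHermitian
    rw [conjTranspose_smul, hM.1]
    congr 1
    rw [Complex.star_def, Complex.conj_eq_iff_im]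
    exact (Complex.nonneg_iff.mp hc).2.symm
  · intro x
    rw [smul_mulVec, dotProduct_smul]
    exact mul_nonneg hc (hM.dotProduct_mulVec_nonneg x)

private lemma sum_psd_eq_zero {ι : Type*} [Fintype ι] {M : ι → Matrix m m ℂ}
    (h : ∀ i, (M i).PosSemidef) (hsum : ∑ i, M i = 0) (i₀ : ι) : M i₀ = 0 := by
  have hquad : ∀ x : m → ℂ, star x ⬝ᵥ (M i₀ *ᵥ x) = 0 := by
    intro x
    have h0 : ∑ i, star x ⬝ᵥ (M i *ᵥ x) = 0 := by
      rw [← dotProduct_sum', ← sum_mulVec', hsum]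
      simp
    have := (Finset.sum_eq_zero_iff_of_nonneg (fun i _ => (h i).dotProduct_mulVec_nonneg x)).mp h0
    exact this i₀ (Finset.mem_univ _)
  set C := funCalc Real.sqrt (M i₀) with hCdef
  have hC : C * C = M i₀ := by
    rw [hCdef, fc_mul (h i₀).1]
    exact (fc_congr (h i₀).1 fun i => Real.mul_self_sqrt ((h i₀).eigenvalues_nonneg i)).trans
      (fc_id (h i₀).1)
  have hCh : Cᴴ = C := fc_herm (h i₀).1 _
  have hCx : ∀ x, C *ᵥ x = 0 := by
    intro x
    have hq := hquad x
    rw [← hC, ← Matrix.mulVec_mulVec, Matrix.dotProduct_mulVec] at hq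
    have hsx : star x ᵥ* C = star (C *ᵥ x) := by rw [Matrix.star_mulVec, hCh]
    rw [hsx] at hq
    exact dotProduct_star_self_eq_zero.mp hq
  have hC0 : C = 0 := by
    ext i j
    have := congr_fun (hCx (Pi.single j 1)) i
    simp only [Matrix.mulVec_single, mul_one] at this
    simpa using this
  rw [← hC, hC0, Matrix.mul_zero]

private lemma kron_conjT {a b : Type*} [Fintype a] [Fintype b]
    (A : Matrix a a ℂ) (B : Matrix b b ℂ) : (A ⊗ₖ B)ᴴ = Aᴴ ⊗ₖ Bᴴ := by
  ext i j
  obtain ⟨i1, i2⟩ := i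
  obtain ⟨j1, j2⟩ := j
  simp [Matrix.conjTranspose_apply, Matrix.kroneckerMap_apply, star_mul', mul_comm]

private lemma outer_conjT {b : Type*} (x : b → ℂ) : (outer x)ᴴ = outer x := by
  ext i j
  simp [outer, Matrix.conjTranspose_apply, Matrix.vecMulVec_apply, mul_comm]

private lemma outer_mul_outer {b ι : Type*} [Fintype b] [DecidableEq ι]
    (e : ι → b → ℂ) (he : OrthoFam e) (k k' : ι) :
    outer (e k) * outer (e k') = if k = k' then outer (e k) else 0 := by
  ext i j
  rw [Matrix.mul_apply]
  have hterm : ∀ mm, outer (e k) i mm * outer (e k') mm j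
      = (star (e k mm) * e k' mm) * (e k i * star (e k' j)) := by
    intro mm
    simp only [outer, Matrix.vecMulVec_apply, Pi.star_apply]
    ring
  rw [Finset.sum_congr rfl (fun mm _ => hterm mm), ← Finset.sum_mul, he k k']
  by_cases h : k = k'
  · subst h
    simp [outer, Matrix.vecMulVec_apply]
  · simp [h]

private lemma swap_mul {m : Type*} [Fintype m] {A B : Matrix m m ℂ}
    (h : A * B = B * A) (Z : Matrix m m ℂ) : A * (B * Z) = B * (A * Z) := by
  rw [← Matrix.mul_assoc, h, Matrix.mul_assoc]

end Aux

set_option maxHeartbeats 1600000 in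
/-- if the Petz-type equality condition (A2) holds, then there is a
CPTP recovery map Γ with Γ(ℬ(U_g ρ U_g†)) = U_g ρ U_g† for all g (condition (A3)). -/
theorem recovery_of_petz_condition
    {G a b : Type*} [Group G] [Fintype G] [Fintype a] [DecidableEq a]
    [Fintype b] [DecidableEq b]
    (U : G → Matrix a a ℂ) (hU : IsProjUnitaryRep U)
    (e : b → b → ℂ) (he : OrthoFam e)
    (ρ : Matrix (a × b) (a × b) ℂ) (hρ : IsDensity ρ)
    (hA2 : ρ = mSqrt (twirl U ρ) * mPinvSqrt (twirl U (meas e ρ)) * meas e ρ *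
        mPinvSqrt (twirl U (meas e ρ)) * mSqrt (twirl U ρ)) :
    ∃ Γ : Matrix (a × b) (a × b) ℂ → Matrix (a × b) (a × b) ℂ, IsCPTP Γ ∧
      ∀ g, Γ (meas e ((U g ⊗ₖ (1 : Matrix b b ℂ)) * ρ * (U g ⊗ₖ (1 : Matrix b b ℂ))ᴴ)) =
        (U g ⊗ₖ (1 : Matrix b b ℂ)) * ρ * (U g ⊗ₖ (1 : Matrix b b ℂ))ᴴ := by
  classical
  obtain ⟨hρpsd, -⟩ := hρ
  obtain ⟨hUu, hUc⟩ := hU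
  set Vm : G → Matrix (a × b) (a × b) ℂ := fun g => (U g ⊗ₖ (1 : Matrix b b ℂ)) with hVm
  set Q : b → Matrix (a × b) (a × b) ℂ := fun k => ((1 : Matrix a a ℂ) ⊗ₖ outer (e k)) with hQdef
  have hmeas_eq : ∀ M : Matrix (a × b) (a × b) ℂ, meas e M = ∑ k, Q k * M * Q k := fun M => rfl
  have htwirl_eq : ∀ M : Matrix (a × b) (a × b) ℂ,
      twirl U M = (Fintype.card G : ℂ)⁻¹ • ∑ g, Vm g * M * (Vm g)ᴴ := fun M => rfl
  have hQherm : ∀ k, (Q k)ᴴ = Q k := by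
    intro k
    simp only [hQdef]
    rw [kron_conjT, conjTranspose_one, outer_conjT]
  have hQQ : ∀ k k', Q k * Q k' = if k = k' then Q k else 0 := by
    intro k k'
    simp only [hQdef]
    rw [← mul_kronecker_mul, Matrix.one_mul, outer_mul_outer e he k k']
    by_cases h : k = k'
    · simp [h]
    · simp [h, kronecker_zero]
  have hQV : ∀ k g, Q k * Vm g = Vm g * Q k := by
    intro k g
    simp only [hQdef, hVm]
    rw [← mul_kronecker_mul, ← mul_kronecker_mul, Matrix.one_mul, Matrix.mul_one, Matrix.one_mul,
      Matrix.mul_one]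
  have hQVd : ∀ k g, (Vm g)ᴴ * Q k = Q k * (Vm g)ᴴ := by
    intro k g
    calc (Vm g)ᴴ * Q k = (Vm g)ᴴ * (Q k)ᴴ := by rw [hQherm]
      _ = (Q k * Vm g)ᴴ := (conjTranspose_mul _ _).symm
      _ = (Vm g * Q k)ᴴ := by rw [hQV]
      _ = (Q k)ᴴ * (Vm g)ᴴ := conjTranspose_mul _ _
      _ = Q k * (Vm g)ᴴ := by rw [hQherm]
  have hVunit : ∀ g, (Vm g)ᴴ * Vm g = 1 := by
    intro g
    simp only [hVm]
    rw [kron_conjT, conjTranspose_one, ← mul_kronecker_mul, Matrix.mul_one,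
      ← Matrix.star_eq_conjTranspose, Matrix.mem_unitaryGroup_iff'.mp (hUu g), one_kronecker_one]
  have hVVc : ∀ g h : G, ∃ c : ℂ, c * star c = 1 ∧ Vm g * Vm h = c • Vm (g * h) := by
    intro g h
    obtain ⟨c, hc1, hc2⟩ := hUc g h
    refine ⟨c, ?_, ?_⟩
    · rw [Complex.star_def, Complex.mul_conj, Complex.normSq_eq_norm_sq]
      have : ‖c‖ = 1 := hc1
      rw [this]
      norm_num
    · simp only [hVm]
      rw [← mul_kronecker_mul, Matrix.one_mul, hc2, smul_kronecker]
  have hVtw : ∀ (M : Matrix (a × b) (a × b) ℂ) g, Vm g * twirl U M * (Vm g)ᴴ = twirl U M := by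
    intro M g
    rw [htwirl_eq]
    rw [mul_smul_comm, smul_mul_assoc]
    congr 1
    rw [Finset.mul_sum, Finset.sum_mul]
    refine Fintype.sum_equiv (Equiv.mulLeft g) _ _ ?_
    intro h
    obtain ⟨c, hcc, hmul⟩ := hVVc g h
    have expand : Vm g * (Vm h * M * (Vm h)ᴴ) * (Vm g)ᴴ = (Vm g * Vm h) * M * (Vm g * Vm h)ᴴ := by
      rw [conjTranspose_mul]
      simp only [Matrix.mul_assoc]
    rw [expand, hmul, conjTranspose_smul, smul_mul_assoc, smul_mul_assoc, mul_smul_comm,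
      smul_smul, hcc, one_smul]
    simp [Equiv.coe_mulLeft]
  have hVcomm : ∀ (M : Matrix (a × b) (a × b) ℂ) g, Vm g * twirl U M = twirl U M * Vm g := by
    intro M g
    calc Vm g * twirl U M = Vm g * twirl U M * ((Vm g)ᴴ * Vm g) := by
          rw [hVunit, Matrix.mul_one]
      _ = (Vm g * twirl U M * (Vm g)ᴴ) * Vm g := by simp only [Matrix.mul_assoc]
      _ = twirl U M * Vm g := by rw [hVtw]
  have hQmeasL : ∀ k (M : Matrix (a × b) (a × b) ℂ), Q k * meas e M = Q k * M * Q k := by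
    intro k M
    rw [hmeas_eq, Finset.mul_sum]
    have hterm : ∀ j, Q k * (Q j * M * Q j) = if k = j then Q k * M * Q j else 0 := by
      intro j
      rw [show Q k * (Q j * M * Q j) = (Q k * Q j) * (M * Q j) by simp only [Matrix.mul_assoc],
        hQQ]
      by_cases h : k = j
      · subst h
        simp [Matrix.mul_assoc]
      · simp [h]
    rw [Finset.sum_congr rfl fun j _ => hterm j, Finset.sum_ite_eq]
    simp
  have hQmeasR : ∀ k (M : Matrix (a × b) (a × b) ℂ), meas e M * Q k = Q k * M * Q k := by
    intro k M
    rw [hmeas_eq, Finset.sum_mul]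
    have hterm : ∀ j, (Q j * M * Q j) * Q k = if j = k then Q j * M * Q k else 0 := by
      intro j
      rw [show (Q j * M * Q j) * Q k = Q j * M * (Q j * Q k) by simp only [Matrix.mul_assoc],
        hQQ]
      by_cases h : j = k
      · subst h
        simp [Matrix.mul_assoc]
      · simp [h]
    rw [Finset.sum_congr rfl fun j _ => hterm j, Finset.sum_ite_eq']
    simp
  have hQmeas : ∀ k (M : Matrix (a × b) (a × b) ℂ), Q k * meas e M = meas e M * Q k := by
    intro k M
    rw [hQmeasL, hQmeasR]
  have hmeas_idem : ∀ M : Matrix (a × b) (a × b) ℂ, meas e (meas e M) = meas e M := by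
    intro M
    conv_lhs => rw [hmeas_eq (meas e M)]
    conv_rhs => rw [hmeas_eq M]
    refine Finset.sum_congr rfl fun k _ => ?_
    rw [show Q k * meas e M * Q k = (Q k * meas e M) * Q k from rfl, hQmeasL]
    rw [show Q k * M * Q k * Q k = Q k * M * (Q k * Q k) by simp only [Matrix.mul_assoc], hQQ]
    simp
  have hmeasV : ∀ (M : Matrix (a × b) (a × b) ℂ) g,
      meas e (Vm g * M * (Vm g)ᴴ) = Vm g * meas e M * (Vm g)ᴴ := by
    intro M g
    rw [hmeas_eq, hmeas_eq, Finset.mul_sum, Finset.sum_mul]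
    refine Finset.sum_congr rfl fun k _ => ?_
    calc Q k * (Vm g * M * (Vm g)ᴴ) * Q k
        = (Q k * Vm g) * M * ((Vm g)ᴴ * Q k) := by simp only [Matrix.mul_assoc]
      _ = (Vm g * Q k) * M * (Q k * (Vm g)ᴴ) := by rw [hQV, hQVd]
      _ = Vm g * (Q k * M * Q k) * (Vm g)ᴴ := by simp only [Matrix.mul_assoc]
  have hmeas_smul : ∀ (c : ℂ) (M : Matrix (a × b) (a × b) ℂ),
      meas e (c • M) = c • meas e M := by
    intro c M
    rw [hmeas_eq, hmeas_eq, Finset.smul_sum]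
    refine Finset.sum_congr rfl fun k _ => ?_
    rw [mul_smul_comm, smul_mul_assoc]
  have hmeas_sum : ∀ M : G → Matrix (a × b) (a × b) ℂ,
      meas e (∑ h, M h) = ∑ h, meas e (M h) := by
    intro M
    simp only [hmeas_eq]
    simp only [Finset.mul_sum, Finset.sum_mul]
    rw [Finset.sum_comm]
  have hmeasTw : ∀ M : Matrix (a × b) (a × b) ℂ,
      meas e (twirl U M) = twirl U (meas e M) := by
    intro M
    rw [htwirl_eq, hmeas_smul, hmeas_sum, htwirl_eq]
    congr 1
    exact Finset.sum_congr rfl fun h _ => hmeasV M h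
  set X := meas e ρ with hX
  set σm := twirl U ρ with hσm
  set τm := twirl U X with hτm
  have hXpsd : X.PosSemidef := by
    rw [hX, hmeas_eq]
    refine psd_sum _ fun k => ?_
    have := hρpsd.mul_mul_conjTranspose_same (Q k)
    rwa [hQherm] at this
  have hcnn : (0:ℂ) ≤ (Fintype.card G : ℂ)⁻¹ := by
    have hcast : ((Fintype.card G : ℂ))⁻¹ = Complex.ofReal ((Fintype.card G : ℝ))⁻¹ := by
      push_cast
      ring
    rw [hcast, Complex.zero_le_real]
    positivity
  have htwpsd : ∀ M : Matrix (a × b) (a × b) ℂ, M.PosSemidef → (twirl U M).PosSemidef := by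
    intro M hM
    rw [htwirl_eq]
    exact psd_smul hcnn (psd_sum _ fun h => hM.mul_mul_conjTranspose_same _)
  have hσpsd : σm.PosSemidef := htwpsd ρ hρpsd
  have hτpsd : τm.PosSemidef := htwpsd X hXpsd
  have hQX : ∀ k, Q k * X = X * Q k := fun k => hQmeas k ρ
  have hQτ : ∀ k, Q k * τm = τm * Q k := by
    intro k
    rw [hτm, htwirl_eq, mul_smul_comm, smul_mul_assoc]
    congr 1
    rw [Finset.mul_sum, Finset.sum_mul]
    refine Finset.sum_congr rfl fun h _ => ?_
    simp only [Matrix.mul_assoc]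
    rw [swap_mul (hQV k h), swap_mul (hQX k), ← hQVd k h]
  set S := mSqrt σm with hS
  set P := mPinvSqrt τm with hP
  have hSfc : S = funCalc Real.sqrt σm := hS.trans rfl
  have hPfc : P = funCalc (fun x => if x = 0 then 0 else 1 / Real.sqrt x) τm := hP.trans rfl
  have hVσ : ∀ g, Vm g * σm = σm * Vm g := fun g => hVcomm ρ g
  have hVτ : ∀ g, Vm g * τm = τm * Vm g := fun g => hVcomm X g
  have hVS : ∀ g, Vm g * S = S * Vm g := fun g => fc_comm hσpsd.1 _ (hVσ g)
  have hVP : ∀ g, Vm g * P = P * Vm g := fun g => fc_comm hτpsd.1 _ (hVτ g)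
  have hQP : ∀ k, Q k * P = P * Q k := fun k => fc_comm hτpsd.1 _ (hQτ k)
  set Pi2 := funCalc (fun x => if x = 0 then 0 else 1) τm with hPi2
  set Rm := funCalc (fun x => if x = 0 then 1 else 0) τm with hRmdef
  have hRherm : Rmᴴ = Rm := fc_herm hτpsd.1 _
  have hSherm : Sᴴ = S := fc_herm hσpsd.1 _
  have hPherm : Pᴴ = P := fc_herm hτpsd.1 _
  have hSS : S * S = σm := by
    rw [hSfc, fc_mul hσpsd.1]
    exact (fc_congr hσpsd.1 fun i => Real.mul_self_sqrt (hσpsd.eigenvalues_nonneg i)).trans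
      (fc_id hσpsd.1)
  have hPτP : P * τm * P = Pi2 := by
    have h2 := fc_mul (A := τm) hτpsd.1 (fun x => if x = 0 then 0 else 1 / Real.sqrt x)
      (fun x => x)
    rw [fc_id hτpsd.1] at h2
    rw [hPfc, h2, fc_mul hτpsd.1, hPi2]
    refine fc_congr hτpsd.1 fun i => ?_
    have hnn := hτpsd.eigenvalues_nonneg i
    by_cases h0 : hτpsd.1.eigenvalues i = 0
    · simp [h0]
    · have hpos : 0 < hτpsd.1.eigenvalues i := lt_of_le_of_ne hnn (Ne.symm h0)
      have hs : Real.sqrt (hτpsd.1.eigenvalues i) ≠ 0 := by positivity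
      rw [if_neg h0, if_neg h0]
      field_simp
      rw [Real.sq_sqrt hnn]
  have hRτ : Rm * τm = 0 := by
    have h2 := fc_mul (A := τm) hτpsd.1 (fun x => if x = 0 then 1 else 0) (fun x => x)
    rw [fc_id hτpsd.1] at h2
    rw [hRmdef, h2,
      fc_congr hτpsd.1 (g := fun _ => (0:ℝ)) fun i => by by_cases h : hτpsd.1.eigenvalues i = 0 <;> simp [h]]
    exact fc_zero hτpsd.1
  have hPiR : Pi2 + Rm = 1 := by
    rw [hPi2, hRmdef, fc_add hτpsd.1,
      fc_congr hτpsd.1 (g := fun _ => (1:ℝ)) fun i => by by_cases h : hτpsd.1.eigenvalues i = 0 <;> simp [h]]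
    exact fc_one hτpsd.1
  have hRR : Rm * Rm = Rm := by
    rw [hRmdef, fc_mul hτpsd.1]
    exact fc_congr hτpsd.1 fun i => by by_cases h : hτpsd.1.eigenvalues i = 0 <;> simp [h]
  have hRVXR : ∀ g, Rm * (Vm g * X * (Vm g)ᴴ) * Rm = 0 := by
    have hsum0 : ∑ h : G, Rm * (Vm h * X * (Vm h)ᴴ) * Rm = 0 := by
      have h2 : Rm * τm * Rm = 0 := by rw [hRτ, Matrix.zero_mul]
      rw [hτm, htwirl_eq, mul_smul_comm, smul_mul_assoc, Finset.mul_sum, Finset.sum_mul] at h2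
      rcases smul_eq_zero.mp h2 with hc | h
      · exact absurd hc (inv_ne_zero (Nat.cast_ne_zero.mpr Fintype.card_ne_zero))
      · exact h
    intro g
    refine sum_psd_eq_zero (fun h => ?_) hsum0 g
    have h3 : Rm * (Vm h * X * (Vm h)ᴴ) * Rm = (Rm * Vm h) * X * (Rm * Vm h)ᴴ := by
      rw [conjTranspose_mul, hRherm]
      simp only [Matrix.mul_assoc]
    rw [h3]
    exact hXpsd.mul_mul_conjTranspose_same _
  set Kk : b → Matrix (a × b) (a × b) ℂ := fun k => S * Q k * P with hKk
  have hKd : ∀ k, (Kk k)ᴴ = P * Q k * S := by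
    intro k
    simp only [hKk]
    rw [conjTranspose_mul, conjTranspose_mul, hSherm, hPherm, hQherm]
    simp only [Matrix.mul_assoc]
  set Γ : Matrix (a × b) (a × b) ℂ → Matrix (a × b) (a × b) ℂ :=
    fun Y => (∑ k, Kk k * Y * (Kk k)ᴴ) + Rm * Y * Rmᴴ with hΓ
  refine ⟨Γ, ⟨Fintype.card (Option b),
    fun t => ((Fintype.equivFin (Option b)).symm t).elim Rm Kk, ?_, ?_⟩, ?_⟩
  · intro Y
    rw [Fintype.sum_equiv ((Fintype.equivFin (Option b)).symm)
      (fun t => ((Fintype.equivFin (Option b)).symm t).elim Rm Kk * Y *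
        (((Fintype.equivFin (Option b)).symm t).elim Rm Kk)ᴴ)
      (fun o : Option b => o.elim Rm Kk * Y * (o.elim Rm Kk)ᴴ) (fun t => rfl),
      Fintype.sum_option]
    simp only [Option.elim]
    rw [hΓ]
    rw [add_comm]
  · rw [Fintype.sum_equiv ((Fintype.equivFin (Option b)).symm)
      (fun t => (((Fintype.equivFin (Option b)).symm t).elim Rm Kk)ᴴ *
        (((Fintype.equivFin (Option b)).symm t).elim Rm Kk))
      (fun o : Option b => (o.elim Rm Kk)ᴴ * (o.elim Rm Kk)) (fun t => rfl),
      Fintype.sum_option]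
    simp only [Option.elim]
    rw [hRherm, hRR]
    have hKK : ∀ k, (Kk k)ᴴ * Kk k = P * (Q k * σm * Q k) * P := by
      intro k
      rw [hKd]
      simp only [hKk, Matrix.mul_assoc]
      rw [show S * (S * (Q k * P)) = σm * (Q k * P) by rw [← Matrix.mul_assoc, hSS]]
    rw [Finset.sum_congr rfl fun k _ => hKK k]
    have hsum : ∑ k, P * (Q k * σm * Q k) * P = P * (∑ k, Q k * σm * Q k) * P := by
      conv_rhs => rw [Finset.mul_sum, Finset.sum_mul]
    rw [hsum, ← hmeas_eq σm, show meas e σm = τm from hmeasTw ρ, hPτP, add_comm, hPiR]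
  · intro g
    show Γ (meas e (Vm g * ρ * (Vm g)ᴴ)) = Vm g * ρ * (Vm g)ᴴ
    rw [hmeasV ρ g]
    simp only [hΓ]
    have hpart2 : Rm * (Vm g * meas e ρ * (Vm g)ᴴ) * Rmᴴ = 0 := by
      rw [hRherm]
      exact hRVXR g
    rw [hpart2, add_zero]
    have hterm : ∀ k, Kk k * (Vm g * meas e ρ * (Vm g)ᴴ) * (Kk k)ᴴ
        = Vm g * (Kk k * meas e ρ * (Kk k)ᴴ) * (Vm g)ᴴ := by
      intro k
      have hKV : Kk k * Vm g = Vm g * Kk k := by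
        simp only [hKk, Matrix.mul_assoc]
        rw [show P * Vm g = Vm g * P from (hVP g).symm, swap_mul (hQV k g) P,
          ← swap_mul (hVS g) (Q k * P)]
      have hKVd : (Vm g)ᴴ * (Kk k)ᴴ = (Kk k)ᴴ * (Vm g)ᴴ := by
        rw [← conjTranspose_mul, ← conjTranspose_mul, hKV]
      simp only [Matrix.mul_assoc]
      rw [hKVd, swap_mul hKV]
    rw [Finset.sum_congr rfl fun k _ => hterm k, ← Finset.sum_mul, ← Finset.mul_sum]
    have hterm2 : ∀ k, Kk k * meas e ρ * (Kk k)ᴴ = S * P * (Q k * meas e ρ * Q k) * P * S := by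
      intro k
      rw [hKd]
      simp only [hKk, Matrix.mul_assoc]
      rw [swap_mul (hQP k), show P * (Q k * S) = Q k * (P * S) from (swap_mul (hQP k) S).symm]
    rw [Finset.sum_congr rfl fun k _ => hterm2 k]
    have hsum2 : ∑ k, S * P * (Q k * meas e ρ * Q k) * P * S
        = S * P * (∑ k, Q k * meas e ρ * Q k) * P * S := by
      conv_rhs => rw [Finset.mul_sum, Finset.sum_mul, Finset.sum_mul]
    rw [hsum2, ← hmeas_eq (meas e ρ), hmeas_idem ρ]
    rw [← hX, ← hA2]

end DenseCoding
end

section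
/- With notation as above (maximally entangled |Φ⟩ = (1/√l)Σ_λ |ψ_λ⟩|v_λ⟩, abelian multiplicity-free twirl 𝒢, Fourier measurement ℬ), the operators l·ℬ(|Φ⟩⟨Φ|) and l·𝒢(|Φ⟩⟨Φ|) are orthogonal projections, and the intersection of their ranges is the one-dimensional subspace spanned by |Φ⟩; consequently √(𝒢(|Φ⟩⟨Φ|)) · ℬ(|Φ⟩⟨Φ|) · √(𝒢(|Φ⟩⟨Φ|)) = (1/l²)|Φ⟩⟨Φ|. -/
open scoped Matrix Kronecker ComplexOrder
open Matrix

namespace DenseCoding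

variable {n : Type*}

section Aux

set_option linter.unusedSectionVars false

variable {γ ι κ : Type*} [Fintype γ]

lemma outer_def (x : γ → ℂ) : outer x = Matrix.vecMulVec x (star x) := rfl

lemma outer_conjTranspose (x : γ → ℂ) : (outer x)ᴴ = outer x := by
  ext i j
  simp [outer, Matrix.vecMulVec_apply, Matrix.conjTranspose_apply, mul_comm]

lemma outer_mulVec (x y : γ → ℂ) : outer x *ᵥ y = (star x ⬝ᵥ y) • x := by
  funext i
  simp only [outer, Matrix.mulVec, dotProduct, Matrix.vecMulVec_apply, Pi.smul_apply,
    Pi.star_apply, smul_eq_mul, Finset.sum_mul, Finset.mul_sum]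
  exact Finset.sum_congr rfl fun j _ => by ring

lemma outer_smul' (c : ℂ) (x : γ → ℂ) :
    outer (fun p => c * x p) = (c * star c) • outer x := by
  ext i j
  simp only [outer, Matrix.vecMulVec_apply, Matrix.smul_apply, Pi.star_apply, smul_eq_mul,
    star_mul']
  ring

lemma mul_vecMulVec (M : Matrix γ γ ℂ) (a b : γ → ℂ) :
    M * Matrix.vecMulVec a b = Matrix.vecMulVec (M *ᵥ a) b := by
  ext i j
  simp only [Matrix.mul_apply, Matrix.vecMulVec_apply, Matrix.mulVec, dotProduct,
    Finset.sum_mul]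
  exact Finset.sum_congr rfl fun q _ => by ring

lemma vecMulVec_mul (a b : γ → ℂ) (M : Matrix γ γ ℂ) :
    Matrix.vecMulVec a b * M = Matrix.vecMulVec a (b ᵥ* M) := by
  ext i j
  simp only [Matrix.mul_apply, Matrix.vecMulVec_apply, Matrix.vecMul, dotProduct,
    Finset.mul_sum]
  exact Finset.sum_congr rfl fun q _ => by ring

lemma conj_outer (M : Matrix γ γ ℂ) (hM : Mᴴ = M) (x : γ → ℂ) :
    M * outer x * M = outer (M *ᵥ x) := by
  rw [outer_def, outer_def, mul_vecMulVec, vecMulVec_mul]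
  congr 1
  rw [← hM, ← Matrix.star_mulVec, hM]

lemma sum_outer_mul_sum_outer [Fintype ι] [Fintype κ] (u : ι → γ → ℂ) (w : κ → γ → ℂ) :
    (∑ s, outer (u s)) * (∑ k, outer (w k)) =
      ∑ s, ∑ k, (∑ q, star (u s q) * w k q) • Matrix.vecMulVec (u s) (star (w k)) := by
  ext i j
  simp only [Matrix.mul_apply, Matrix.sum_apply, Matrix.smul_apply, outer,
    Matrix.vecMulVec_apply, Pi.star_apply, smul_eq_mul]
  calc ∑ q, (∑ s, u s i * star (u s q)) * (∑ k, w k q * star (w k j))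
      = ∑ q, ∑ s, ∑ k, (u s i * star (u s q)) * (w k q * star (w k j)) :=
        Finset.sum_congr rfl fun q _ => Finset.sum_mul_sum _ _ _ _
    _ = ∑ s, ∑ q, ∑ k, (u s i * star (u s q)) * (w k q * star (w k j)) := Finset.sum_comm
    _ = ∑ s, ∑ k, ∑ q, (u s i * star (u s q)) * (w k q * star (w k j)) :=
        Finset.sum_congr rfl fun s _ => Finset.sum_comm
    _ = ∑ s, ∑ k, (∑ q, star (u s q) * w k q) * (u s i * star (w k j)) := by
        refine Finset.sum_congr rfl fun s _ => Finset.sum_congr rfl fun k _ => ?_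
        rw [Finset.sum_mul]
        exact Finset.sum_congr rfl fun q _ => by ring

lemma sum_outer_conjTranspose [Fintype ι] (u : ι → γ → ℂ) :
    (∑ s, outer (u s))ᴴ = ∑ s, outer (u s) := by
  rw [Matrix.conjTranspose_sum]
  exact Finset.sum_congr rfl fun s _ => outer_conjTranspose (u s)

lemma sum_outer_proj [Fintype ι] [DecidableEq ι] (u : ι → γ → ℂ) (hu : OrthoFam u) :
    (∑ s, outer (u s)) * (∑ s, outer (u s)) = ∑ s, outer (u s) := by
  have hu' : ∀ k k', ∑ i, star (u k i) * u k' i = if k = k' then (1:ℂ) else 0 := hu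
  rw [sum_outer_mul_sum_outer]
  refine Finset.sum_congr rfl fun s _ => ?_
  simp only [hu', ite_smul, one_smul, zero_smul]
  simp [Finset.sum_ite_eq, outer_def]

lemma proj_fixes [Fintype ι] [DecidableEq ι] (u : ι → γ → ℂ) (hu : OrthoFam u) :
    (∑ s, outer (u s)) *ᵥ (fun q => ∑ t, u t q) = fun q => ∑ t, u t q := by
  have hu' : ∀ k k', ∑ i, star (u k i) * u k' i = if k = k' then (1:ℂ) else 0 := hu
  funext p
  show ∑ q, (∑ s, outer (u s)) p q * (∑ t, u t q) = ∑ t, u t p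
  simp only [Matrix.sum_apply, outer, Matrix.vecMulVec_apply, Pi.star_apply]
  calc ∑ q, (∑ s, u s p * star (u s q)) * (∑ t, u t q)
      = ∑ q, ∑ s, ∑ t, (u s p * star (u s q)) * u t q :=
        Finset.sum_congr rfl fun q _ => Finset.sum_mul_sum _ _ _ _
    _ = ∑ s, ∑ q, ∑ t, (u s p * star (u s q)) * u t q := Finset.sum_comm
    _ = ∑ s, ∑ t, ∑ q, (u s p * star (u s q)) * u t q :=
        Finset.sum_congr rfl fun s _ => Finset.sum_comm
    _ = ∑ s, ∑ t, u s p * ∑ q, star (u s q) * u t q := by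
        refine Finset.sum_congr rfl fun s _ => Finset.sum_congr rfl fun t _ => ?_
        rw [Finset.mul_sum]
        exact Finset.sum_congr rfl fun q _ => by ring
    _ = ∑ s, ∑ t, u s p * (if s = t then (1:ℂ) else 0) :=
        Finset.sum_congr rfl fun s _ => Finset.sum_congr rfl fun t _ => by rw [hu' s t]
    _ = ∑ t, u t p := by simp

lemma star_sum_mul (X Y : γ → ℂ) :
    star (∑ j, star (X j) * Y j) = ∑ j, star (Y j) * X j := by
  rw [star_sum]
  exact Finset.sum_congr rfl fun j _ => by rw [star_mul', star_star, mul_comm]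

lemma inner_lincomb_right [Fintype ι] [DecidableEq ι] (v : ι → γ → ℂ)
    (hv : OrthoFam v) (c : ι → ℂ) (s : ι) :
    ∑ j, star (v s j) * (∑ t, c t * v t j) = c s := by
  have hv' : ∀ k k', ∑ i, star (v k i) * v k' i = if k = k' then (1:ℂ) else 0 := hv
  calc ∑ j, star (v s j) * (∑ t, c t * v t j)
      = ∑ j, ∑ t, c t * (star (v s j) * v t j) := by
        refine Finset.sum_congr rfl fun j _ => ?_
        rw [Finset.mul_sum]
        exact Finset.sum_congr rfl fun t _ => by ring
    _ = ∑ t, ∑ j, c t * (star (v s j) * v t j) := Finset.sum_comm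
    _ = ∑ t, c t * ∑ j, star (v s j) * v t j := by
        refine Finset.sum_congr rfl fun t _ => ?_
        rw [Finset.mul_sum]
    _ = ∑ t, c t * (if s = t then (1:ℂ) else 0) :=
        Finset.sum_congr rfl fun t _ => by rw [hv' s t]
    _ = c s := by simp

lemma sum_mul_lincomb {β' : Type*} [Fintype β'] [Fintype ι] (f : β' → ℂ) (a : ℂ)
    (c : ι → ℂ) (g : ι → β' → ℂ) :
    ∑ j, f j * (a * ∑ t, c t * g t j) = a * ∑ t, c t * ∑ j, f j * g t j := by
  calc ∑ j, f j * (a * ∑ t, c t * g t j)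
      = ∑ j, ∑ t, a * (c t * (f j * g t j)) := by
        refine Finset.sum_congr rfl fun j _ => ?_
        rw [Finset.mul_sum, Finset.mul_sum]
        exact Finset.sum_congr rfl fun t _ => by ring
    _ = ∑ t, ∑ j, a * (c t * (f j * g t j)) := Finset.sum_comm
    _ = a * ∑ t, c t * ∑ j, f j * g t j := by
        rw [Finset.mul_sum]
        refine Finset.sum_congr rfl fun t _ => ?_
        rw [Finset.mul_sum, Finset.mul_sum]

lemma sum_prod_mul {α' β' : Type*} [Fintype α'] [Fintype β'] (a c : α' → ℂ) (b d : β' → ℂ) :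
    ∑ q : α' × β', (a q.1 * b q.2) * (c q.1 * d q.2) = (∑ i, a i * c i) * (∑ j, b j * d j) := by
  rw [Finset.sum_mul_sum, Fintype.sum_prod_type]
  exact Finset.sum_congr rfl fun i _ => Finset.sum_congr rfl fun j _ => by ring

lemma fourier_inv {l : ℕ} (hl : 0 < l) (sl : ℂ) (hinv : sl⁻¹ * sl⁻¹ = (l : ℂ)⁻¹)
    (P : Fin l → Fin l → ℂ)
    (hP : ∀ s t, ∑ k, star (P k s) * P k t = if s = t then (l : ℂ) else 0)
    (c d : Fin l → ℂ) :
    ∑ k, (sl⁻¹ * ∑ s, star (P k s) * c s) * (sl⁻¹ * ∑ t, P k t * d t) = ∑ s, c s * d s := by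
  have hlC : (l : ℂ) ≠ 0 := Nat.cast_ne_zero.mpr hl.ne'
  calc ∑ k, (sl⁻¹ * ∑ s, star (P k s) * c s) * (sl⁻¹ * ∑ t, P k t * d t)
      = ∑ k, ∑ s, ∑ t, (l : ℂ)⁻¹ * ((star (P k s) * c s) * (P k t * d t)) := by
        refine Finset.sum_congr rfl fun k _ => ?_
        rw [show (sl⁻¹ * ∑ s, star (P k s) * c s) * (sl⁻¹ * ∑ t, P k t * d t)
            = (sl⁻¹ * sl⁻¹) * ((∑ s, star (P k s) * c s) * (∑ t, P k t * d t)) from by ring,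
          hinv, Finset.sum_mul_sum, Finset.mul_sum]
        exact Finset.sum_congr rfl fun s _ => by rw [Finset.mul_sum]
    _ = ∑ s, ∑ k, ∑ t, (l : ℂ)⁻¹ * ((star (P k s) * c s) * (P k t * d t)) := Finset.sum_comm
    _ = ∑ s, ∑ t, ∑ k, (l : ℂ)⁻¹ * ((star (P k s) * c s) * (P k t * d t)) :=
        Finset.sum_congr rfl fun s _ => Finset.sum_comm
    _ = ∑ s, ∑ t, ((l : ℂ)⁻¹ * (c s * d t)) * ∑ k, star (P k s) * P k t := by
        refine Finset.sum_congr rfl fun s _ => Finset.sum_congr rfl fun t _ => ?_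
        rw [Finset.mul_sum]
        exact Finset.sum_congr rfl fun k _ => by ring
    _ = ∑ s, ∑ t, ((l : ℂ)⁻¹ * (c s * d t)) * (if s = t then (l : ℂ) else 0) :=
        Finset.sum_congr rfl fun s _ => Finset.sum_congr rfl fun t _ => by rw [hP s t]
    _ = ∑ s, c s * d s := by
        refine Finset.sum_congr rfl fun s _ => ?_
        rw [show (∑ t, ((l : ℂ)⁻¹ * (c s * d t)) * (if s = t then (l : ℂ) else 0))
            = ((l : ℂ)⁻¹ * (c s * d s)) * (l : ℂ) from by simp [mul_ite, Finset.sum_ite_eq]]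
        rw [show ((l : ℂ)⁻¹ * (c s * d s)) * (l : ℂ)
            = (c s * d s) * ((l : ℂ)⁻¹ * (l : ℂ)) from by ring, inv_mul_cancel₀ hlC, mul_one]

end Aux

section PhaseLemmas

lemma phase_add (l : ℕ) (x y : ℤ) : phase l (x + y) = phase l x * phase l y := by
  unfold phase
  rw [← Complex.exp_add]
  congr 1
  push_cast
  ring

lemma phase_zero (l : ℕ) : phase l 0 = 1 := by
  unfold phase
  push_cast
  simp

lemma star_phase (l : ℕ) (x : ℤ) : star (phase l x) = phase l (-x) := by
  unfold phase
  rw [Complex.star_def, ← Complex.exp_conj]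
  congr 1
  simp only [_root_.map_mul, Complex.conj_I, Complex.conj_ofReal]
  push_cast
  ring

lemma star_phase_mul_self (l : ℕ) (x : ℤ) : star (phase l x) * phase l x = 1 := by
  rw [star_phase, ← phase_add, neg_add_cancel, phase_zero]

lemma phase_eq_zpow {l : ℕ} (hl : 0 < l) (x : ℤ) :
    phase l x = Complex.exp (2 * Real.pi * Complex.I / l) ^ x := by
  rw [← Complex.exp_int_mul]
  unfold phase
  congr 1
  push_cast
  ring

lemma phase_sum {l : ℕ} (hl : 0 < l) (m : ℤ) :
    ∑ s : Fin l, phase l (m * ((s.val : ℤ) + 1)) = if (l : ℤ) ∣ m then (l : ℂ) else 0 := by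
  have hprim : IsPrimitiveRoot (Complex.exp (2 * Real.pi * Complex.I / l)) l :=
    Complex.isPrimitiveRoot_exp l hl.ne'
  set ζ : ℂ := Complex.exp (2 * Real.pi * Complex.I / l) with hζ
  have hform : ∀ s : Fin l, phase l (m * ((s.val : ℤ) + 1)) = (ζ ^ m) ^ (s.val + 1) := by
    intro s
    rw [phase_eq_zpow hl, ← hζ, ← zpow_natCast (ζ ^ m), ← _root_.zpow_mul]
    exact congrArg (fun t : ℤ => ζ ^ t) (by push_cast; ring)
  simp only [hform]
  by_cases hdvd : (l : ℤ) ∣ m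
  · have h1 : ζ ^ m = 1 := (hprim.zpow_eq_one_iff_dvd m).mpr hdvd
    simp [h1, if_pos hdvd]
  · have hne : ζ ^ m ≠ 1 := fun h => hdvd ((hprim.zpow_eq_one_iff_dvd m).mp h)
    have hpow : (ζ ^ m) ^ l = 1 := by
      rw [← zpow_natCast (ζ ^ m), ← _root_.zpow_mul, mul_comm, _root_.zpow_mul, zpow_natCast,
        hprim.pow_eq_one, _root_.one_zpow]
    rw [if_neg hdvd]
    calc ∑ s : Fin l, (ζ ^ m) ^ (s.val + 1)
        = (ζ ^ m) * ∑ s ∈ Finset.range l, (ζ ^ m) ^ s := by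
          rw [Finset.mul_sum, ← Fin.sum_univ_eq_sum_range]
          exact Finset.sum_congr rfl fun s _ => by rw [pow_succ, mul_comm]
      _ = 0 := by rw [geom_sum_eq hne, hpow]; simp

lemma omega_ortho {l : ℕ} (hl : 0 < l) (a b : Fin l) :
    ∑ s : Fin l, star (phase l (((a.val : ℤ) + 1) * ((s.val : ℤ) + 1))) *
      phase l (((b.val : ℤ) + 1) * ((s.val : ℤ) + 1)) = if a = b then (l : ℂ) else 0 := by
  have key : ∀ s : Fin l,
      star (phase l (((a.val : ℤ) + 1) * ((s.val : ℤ) + 1))) *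
        phase l (((b.val : ℤ) + 1) * ((s.val : ℤ) + 1)) =
      phase l (((b.val : ℤ) - (a.val : ℤ)) * ((s.val : ℤ) + 1)) := by
    intro s
    rw [star_phase, ← phase_add]
    congr 1
    ring
  simp only [key]
  rw [phase_sum hl]
  by_cases h : a = b
  · subst h; simp
  · rw [if_neg, if_neg h]
    intro hdvd
    have habs : |(b.val : ℤ) - (a.val : ℤ)| < (l : ℤ) := by
      have ha := a.isLt
      have hb := b.isLt
      rw [abs_lt]
      omega
    have h0 := Int.eq_zero_of_abs_lt_dvd hdvd habs
    exact h (Fin.ext (by omega))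

end PhaseLemmas

section SqrtLemma

lemma mSqrt_of_proj {γ : Type*} [Fintype γ] [DecidableEq γ] {A : Matrix γ γ ℂ}
    (hA : A.IsHermitian) {c : ℝ} (hc : 0 < c) (hsq : A * A = (c : ℂ) • A) :
    mSqrt A = ((Real.sqrt c : ℝ) : ℂ)⁻¹ • A := by
  have hev2 : ∀ i, hA.eigenvalues i = 0 ∨ hA.eigenvalues i = c := by
    intro i
    have hx := hA.mulVec_eigenvectorBasis i
    set x : γ → ℂ := (WithLp.equiv 2 (γ → ℂ)) (hA.eigenvectorBasis i) with hxd
    replace hx : A *ᵥ x = hA.eigenvalues i • x := hx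
    have hx0 : x ≠ 0 := by
      intro h
      exact hA.eigenvectorBasis.toBasis.ne_zero i (by
        simpa [hxd, WithLp.equiv] using h)
    obtain ⟨j, hj⟩ := Function.ne_iff.mp hx0
    have hj' : x j ≠ 0 := by simpa using hj
    have h1 : (A * A) *ᵥ x = ((c : ℂ) • A) *ᵥ x := by rw [hsq]
    rw [← Matrix.mulVec_mulVec, hx, Matrix.mulVec_smul, hx, Matrix.smul_mulVec, hx] at h1
    have h2 := congrFun h1 j
    simp only [Pi.smul_apply, Complex.real_smul, smul_eq_mul] at h2
    set μ : ℝ := hA.eigenvalues i with hμ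
    have h2' : ((μ : ℂ) * μ) * x j = ((c : ℂ) * μ) * x j := by
      linear_combination h2
    have h3 : (μ : ℂ) * μ = (c : ℂ) * μ := mul_right_cancel₀ hj' h2'
    have h4 : μ * μ = c * μ := by exact_mod_cast h3
    rcases mul_eq_mul_right_iff.mp h4 with h5 | h5
    · right; exact h5
    · left; exact h5
  have hsqrtc : Real.sqrt c ≠ 0 := ne_of_gt (Real.sqrt_pos.mpr hc)
  have hev : ∀ i, Real.sqrt (hA.eigenvalues i) = (Real.sqrt c)⁻¹ * hA.eigenvalues i := by
    intro i
    rcases hev2 i with h | h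
    · rw [h, Real.sqrt_zero, mul_zero]
    · rw [h]
      symm
      rw [inv_mul_eq_div, div_eq_iff hsqrtc]
      exact (Real.mul_self_sqrt hc.le).symm
  unfold mSqrt funCalc
  rw [dif_pos hA]
  have hdiag : (fun i => ((Real.sqrt (hA.eigenvalues i) : ℝ) : ℂ)) =
      (((Real.sqrt c : ℝ) : ℂ))⁻¹ • fun i => ((hA.eigenvalues i : ℝ) : ℂ) := by
    funext i
    rw [Pi.smul_apply, smul_eq_mul, hev i]
    push_cast
    ring
  rw [hdiag, Matrix.diagonal_smul, Matrix.mul_smul, Matrix.smul_mul]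
  congr 1
  exact hA.spectral_theorem.symm

end SqrtLemma

/-- l·ℬ(|Φ⟩⟨Φ|) and l·𝒢(|Φ⟩⟨Φ|) are orthogonal projections whose ranges
intersect exactly in ℂ|Φ⟩, and √(𝒢(|Φ⟩⟨Φ|))·ℬ(|Φ⟩⟨Φ|)·√(𝒢(|Φ⟩⟨Φ|)) = (1/l²)|Φ⟩⟨Φ|. -/
theorem proj_intersection_maxEnt
    {α β : Type*} [Fintype α] [DecidableEq α] [Fintype β] [DecidableEq β]
    {l : ℕ} (hl : 0 < l)
    (ψ : Fin l → α → ℂ) (hψ : OrthoFam ψ)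
    (v : Fin l → β → ℂ) (hv : OrthoFam v)
    (e : Fin l → β → ℂ)
    (he : ∀ k, e k = fun j =>
      (↑(Real.sqrt l) : ℂ)⁻¹ * ∑ s : Fin l, phase l (((k.val : ℤ) + 1) * ((s.val : ℤ) + 1)) * v s j)
    (Φ : α × β → ℂ)
    (hΦ : Φ = fun q => (↑(Real.sqrt l) : ℂ)⁻¹ * ∑ s, ψ s q.1 * v s q.2)
    (𝒢 : Matrix (α × β) (α × β) ℂ → Matrix (α × β) (α × β) ℂ)
    (h𝒢 : ∀ ρ, 𝒢 ρ = ∑ s, (outer (ψ s) ⊗ₖ (1 : Matrix β β ℂ)) * ρ *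
        (outer (ψ s) ⊗ₖ (1 : Matrix β β ℂ))) :
    ((l : ℂ) • meas e (outer Φ)).IsHermitian ∧
    ((l : ℂ) • meas e (outer Φ)) * ((l : ℂ) • meas e (outer Φ)) = (l : ℂ) • meas e (outer Φ) ∧
    ((l : ℂ) • 𝒢 (outer Φ)).IsHermitian ∧
    ((l : ℂ) • 𝒢 (outer Φ)) * ((l : ℂ) • 𝒢 (outer Φ)) = (l : ℂ) • 𝒢 (outer Φ) ∧
    (LinearMap.range (Matrix.toLin' ((l : ℂ) • meas e (outer Φ))) ⊓
        LinearMap.range (Matrix.toLin' ((l : ℂ) • 𝒢 (outer Φ))) =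
      Submodule.span ℂ {Φ}) ∧
    mSqrt (𝒢 (outer Φ)) * meas e (outer Φ) * mSqrt (𝒢 (outer Φ)) =
      ((l : ℂ) ^ 2)⁻¹ • outer Φ := by
  classical
  have hψ' : ∀ k k', ∑ i, star (ψ k i) * ψ k' i = if k = k' then (1:ℂ) else 0 := hψ
  have hv' : ∀ k k', ∑ i, star (v k i) * v k' i = if k = k' then (1:ℂ) else 0 := hv
  have hlC : (l : ℂ) ≠ 0 := Nat.cast_ne_zero.mpr hl.ne'
  set sl : ℂ := ((Real.sqrt l : ℝ) : ℂ) with hsldef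
  have hsl_sq : sl * sl = (l : ℂ) := by
    rw [hsldef, ← Complex.ofReal_mul, Real.mul_self_sqrt (Nat.cast_nonneg l)]
    exact Complex.ofReal_natCast l
  have hinv : sl⁻¹ * sl⁻¹ = (l : ℂ)⁻¹ := by rw [← mul_inv, hsl_sq]
  have hslstarinv : star sl⁻¹ = sl⁻¹ := by
    rw [hsldef, ← Complex.ofReal_inv, Complex.star_def, Complex.conj_ofReal]
  set ω : Fin l → Fin l → ℂ :=
    fun k s => phase l (((k.val : ℤ) + 1) * ((s.val : ℤ) + 1)) with hωdef
  set φ : Fin l → α → ℂ := fun k i => sl⁻¹ * ∑ s, star (ω k s) * ψ s i with hφdef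
  set u : Fin l → α × β → ℂ := fun s q => ψ s q.1 * v s q.2 with hudef
  set w : Fin l → α × β → ℂ := fun k q => φ k q.1 * e k q.2 with hwdef
  set PG : Matrix (α × β) (α × β) ℂ := ∑ s, outer (u s) with hPGdef
  set PB : Matrix (α × β) (α × β) ℂ := ∑ k, outer (w k) with hPBdef
  have hω1 : ∀ k s, star (ω k s) * ω k s = 1 := by
    intro k s
    simp only [hωdef]
    exact star_phase_mul_self l _
  have hωsum : ∀ k k', ∑ s, star (ω k s) * ω k' s = if k = k' then (l:ℂ) else 0 :=
    fun k k' => omega_ortho hl k k'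
  have hc : ∀ a b : Fin l, ω a b = phase l (((b.val:ℤ)+1) * ((a.val:ℤ)+1)) :=
    fun a b => congrArg (phase l) (mul_comm _ _)
  have hωsum' : ∀ s s', ∑ k, star (ω k s) * ω k s' = if s = s' then (l:ℂ) else 0 := by
    intro s s'
    calc ∑ k, star (ω k s) * ω k s'
        = ∑ k : Fin l, star (phase l (((s.val:ℤ)+1) * ((k.val:ℤ)+1))) *
            phase l (((s'.val:ℤ)+1) * ((k.val:ℤ)+1)) :=
          Finset.sum_congr rfl fun k _ => by rw [hc k s, hc k s']
      _ = if s = s' then (l:ℂ) else 0 := omega_ortho hl s s'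
  -- inner products
  have h2 : ∀ k s, ∑ j, star (v s j) * e k j = sl⁻¹ * ω k s := by
    intro k s
    calc ∑ j, star (v s j) * e k j
        = ∑ j, star (v s j) * (sl⁻¹ * ∑ t, ω k t * v t j) := by simp only [he, hωdef]
      _ = sl⁻¹ * ∑ t, ω k t * ∑ j, star (v s j) * v t j := sum_mul_lincomb _ _ _ _
      _ = sl⁻¹ * ω k s := by
          congr 1
          calc ∑ t, ω k t * ∑ j, star (v s j) * v t j
              = ∑ t, ω k t * (if s = t then (1:ℂ) else 0) :=
                Finset.sum_congr rfl fun t _ => by rw [hv' s t]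
            _ = ω k s := by simp
  have h1 : ∀ k s, ∑ j, star (e k j) * v s j = sl⁻¹ * star (ω k s) := by
    intro k s
    calc ∑ j, star (e k j) * v s j
        = star (∑ j, star (v s j) * e k j) := (star_sum_mul _ _).symm
      _ = star (sl⁻¹ * ω k s) := by rw [h2 k s]
      _ = sl⁻¹ * star (ω k s) := by rw [star_mul', hslstarinv, mul_comm]
  have h4 : ∀ k s, ∑ i, star (ψ s i) * φ k i = sl⁻¹ * star (ω k s) := by
    intro k s
    calc ∑ i, star (ψ s i) * φ k i
        = ∑ i, star (ψ s i) * (sl⁻¹ * ∑ t, star (ω k t) * ψ t i) := by simp only [hφdef]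
      _ = sl⁻¹ * ∑ t, star (ω k t) * ∑ i, star (ψ s i) * ψ t i := sum_mul_lincomb _ _ _ _
      _ = sl⁻¹ * star (ω k s) := by
          congr 1
          calc ∑ t, star (ω k t) * ∑ i, star (ψ s i) * ψ t i
              = ∑ t, star (ω k t) * (if s = t then (1:ℂ) else 0) :=
                Finset.sum_congr rfl fun t _ => by rw [hψ' s t]
            _ = star (ω k s) := by simp
  have h3 : ∀ k s, ∑ i, star (φ k i) * ψ s i = sl⁻¹ * ω k s := by
    intro k s
    calc ∑ i, star (φ k i) * ψ s i
        = star (∑ i, star (ψ s i) * φ k i) := (star_sum_mul _ _).symm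
      _ = star (sl⁻¹ * star (ω k s)) := by rw [h4 k s]
      _ = sl⁻¹ * ω k s := by rw [star_mul', hslstarinv, star_star, mul_comm]
  -- orthonormal families
  have he_ortho : ∀ k k', ∑ j, star (e k j) * e k' j = if k = k' then (1:ℂ) else 0 := by
    intro k k'
    calc ∑ j, star (e k j) * e k' j
        = ∑ j, star (e k j) * (sl⁻¹ * ∑ t, ω k' t * v t j) := by simp only [he, hωdef]
      _ = sl⁻¹ * ∑ t, ω k' t * ∑ j, star (e k j) * v t j := sum_mul_lincomb _ _ _ _
      _ = sl⁻¹ * ∑ t, ω k' t * (sl⁻¹ * star (ω k t)) :=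
          congrArg _ (Finset.sum_congr rfl fun t _ => by rw [h1 k t])
      _ = (l:ℂ)⁻¹ * ∑ t, star (ω k t) * ω k' t := by
          rw [Finset.mul_sum, Finset.mul_sum, ← hinv]
          exact Finset.sum_congr rfl fun t _ => by ring
      _ = if k = k' then (1:ℂ) else 0 := by
          rw [hωsum k k']
          by_cases h : k = k' <;> simp [h, inv_mul_cancel₀ hlC]
  have hφ_ortho : ∀ k k', ∑ i, star (φ k i) * φ k' i = if k = k' then (1:ℂ) else 0 := by
    intro k k'
    calc ∑ i, star (φ k i) * φ k' i
        = ∑ i, star (φ k i) * (sl⁻¹ * ∑ t, star (ω k' t) * ψ t i) := by simp only [hφdef]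
      _ = sl⁻¹ * ∑ t, star (ω k' t) * ∑ i, star (φ k i) * ψ t i := sum_mul_lincomb _ _ _ _
      _ = sl⁻¹ * ∑ t, star (ω k' t) * (sl⁻¹ * ω k t) :=
          congrArg _ (Finset.sum_congr rfl fun t _ => by rw [h3 k t])
      _ = (l:ℂ)⁻¹ * ∑ t, ω k t * star (ω k' t) := by
          rw [Finset.mul_sum, Finset.mul_sum, ← hinv]
          exact Finset.sum_congr rfl fun t _ => by ring
      _ = (l:ℂ)⁻¹ * star (∑ t, star (ω k t) * ω k' t) := by
          congr 1
          rw [star_sum]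
          exact Finset.sum_congr rfl fun t _ => by rw [star_mul', star_star]
      _ = if k = k' then (1:ℂ) else 0 := by
          rw [hωsum k k']
          by_cases h : k = k' <;> simp [h, inv_mul_cancel₀ hlC]
  have hu_ortho : OrthoFam u := by
    intro s t
    calc ∑ q, star (u s q) * u t q
        = ∑ q : α × β, (star (ψ s q.1) * star (v s q.2)) * (ψ t q.1 * v t q.2) := by
          refine Finset.sum_congr rfl fun q _ => ?_
          simp only [hudef]
          rw [star_mul']
      _ = (∑ i, star (ψ s i) * ψ t i) * (∑ j, star (v s j) * v t j) :=
          sum_prod_mul (fun i => star (ψ s i)) (fun i => ψ t i)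
            (fun j => star (v s j)) (fun j => v t j)
      _ = if s = t then (1:ℂ) else 0 := by
          rw [hψ' s t, hv' s t]
          by_cases h : s = t <;> simp [h]
  have hw_ortho : OrthoFam w := by
    intro k k'
    calc ∑ q, star (w k q) * w k' q
        = ∑ q : α × β, (star (φ k q.1) * star (e k q.2)) * (φ k' q.1 * e k' q.2) := by
          refine Finset.sum_congr rfl fun q _ => ?_
          simp only [hwdef]
          rw [star_mul']
      _ = (∑ i, star (φ k i) * φ k' i) * (∑ j, star (e k j) * e k' j) :=
          sum_prod_mul (fun i => star (φ k i)) (fun i => φ k' i)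
            (fun j => star (e k j)) (fun j => e k' j)
      _ = if k = k' then (1:ℂ) else 0 := by
          rw [hφ_ortho k k', he_ortho k k']
          by_cases h : k = k' <;> simp [h]
  have huw : ∀ s k, ∑ q, star (u s q) * w k q = (l:ℂ)⁻¹ := by
    intro s k
    calc ∑ q, star (u s q) * w k q
        = ∑ q : α × β, (star (ψ s q.1) * star (v s q.2)) * (φ k q.1 * e k q.2) := by
          refine Finset.sum_congr rfl fun q _ => ?_
          simp only [hudef, hwdef]
          rw [star_mul']
      _ = (∑ i, star (ψ s i) * φ k i) * (∑ j, star (v s j) * e k j) :=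
          sum_prod_mul (fun i => star (ψ s i)) (fun i => φ k i)
            (fun j => star (v s j)) (fun j => e k j)
      _ = (sl⁻¹ * star (ω k s)) * (sl⁻¹ * ω k s) := by rw [h4 k s, h2 k s]
      _ = (sl⁻¹ * sl⁻¹) * (star (ω k s) * ω k s) := by ring
      _ = (l:ℂ)⁻¹ := by rw [hinv, hω1 k s, mul_one]
  -- Φ decompositions
  have hΦu : ∀ q, Φ q = sl⁻¹ * ∑ s, u s q := by
    intro q
    simp only [hΦ, hudef]
  have hsumw : ∀ q, ∑ k, w k q = ∑ s, u s q := by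
    intro q
    calc ∑ k, w k q
        = ∑ k, (sl⁻¹ * ∑ s, star (ω k s) * ψ s q.1) * (sl⁻¹ * ∑ t, ω k t * v t q.2) := by
          simp only [hwdef, hφdef, he, hωdef]
      _ = ∑ s, ψ s q.1 * v s q.2 :=
          fourier_inv hl sl hinv ω hωsum' (fun s => ψ s q.1) (fun t => v t q.2)
      _ = ∑ s, u s q := by simp only [hudef]
  -- kronecker factors are Hermitian
  have hMBherm : ∀ k, ((1 : Matrix α α ℂ) ⊗ₖ outer (e k))ᴴ
      = (1 : Matrix α α ℂ) ⊗ₖ outer (e k) := by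
    intro k
    ext p r
    by_cases h : p.1 = r.1
    · simp [Matrix.conjTranspose_apply, Matrix.kroneckerMap_apply, outer,
        Matrix.vecMulVec_apply, Matrix.one_apply, h, star_mul', star_star, mul_comm]
    · simp [Matrix.conjTranspose_apply, Matrix.kroneckerMap_apply, outer,
        Matrix.vecMulVec_apply, Matrix.one_apply, h, Ne.symm h]
  have hMGherm : ∀ s, (outer (ψ s) ⊗ₖ (1 : Matrix β β ℂ))ᴴ
      = outer (ψ s) ⊗ₖ (1 : Matrix β β ℂ) := by
    intro s
    ext p r
    by_cases h : p.2 = r.2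
    · simp [Matrix.conjTranspose_apply, Matrix.kroneckerMap_apply, outer,
        Matrix.vecMulVec_apply, Matrix.one_apply, h, star_mul', star_star, mul_comm]
    · simp [Matrix.conjTranspose_apply, Matrix.kroneckerMap_apply, outer,
        Matrix.vecMulVec_apply, Matrix.one_apply, h, Ne.symm h]
  -- action of the Kraus operators on Φ
  have hMBv : ∀ k, ((1 : Matrix α α ℂ) ⊗ₖ outer (e k)) *ᵥ Φ = fun p => sl⁻¹ * w k p := by
    intro k
    funext p
    show ∑ q : α × β, ((1 : Matrix α α ℂ) ⊗ₖ outer (e k)) p q * Φ q = sl⁻¹ * w k p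
    calc ∑ q : α × β, ((1 : Matrix α α ℂ) ⊗ₖ outer (e k)) p q * Φ q
        = ∑ i, ∑ j, ((if p.1 = i then (1:ℂ) else 0) * (e k p.2 * star (e k j))) * Φ (i, j) := by
          rw [Fintype.sum_prod_type]
          refine Finset.sum_congr rfl fun i _ => Finset.sum_congr rfl fun j _ => ?_
            
          rw [Matrix.kroneckerMap_apply, Matrix.one_apply]
          rfl
      _ = ∑ i, (if p.1 = i then (1:ℂ) else 0) * ∑ j, (e k p.2 * star (e k j)) * Φ (i, j) := by
          refine Finset.sum_congr rfl fun i _ => ?_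
          rw [Finset.mul_sum]
          exact Finset.sum_congr rfl fun j _ => by ring
      _ = ∑ j, (e k p.2 * star (e k j)) * Φ (p.1, j) := by
          simp [ite_mul, zero_mul, one_mul, Finset.sum_ite_eq]
      _ = e k p.2 * ∑ j, star (e k j) * Φ (p.1, j) := by
          rw [Finset.mul_sum]
          exact Finset.sum_congr rfl fun j _ => by ring
      _ = e k p.2 * (sl⁻¹ * ∑ s, ψ s p.1 * ∑ j, star (e k j) * v s j) := by
          congr 1
          calc ∑ j, star (e k j) * Φ (p.1, j)
              = ∑ j, star (e k j) * (sl⁻¹ * ∑ s, ψ s p.1 * v s j) := by simp only [hΦ]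
            _ = sl⁻¹ * ∑ s, ψ s p.1 * ∑ j, star (e k j) * v s j := sum_mul_lincomb _ _ _ _
      _ = sl⁻¹ * w k p := by
          rw [show ∑ s, ψ s p.1 * ∑ j, star (e k j) * v s j
              = ∑ s, ψ s p.1 * (sl⁻¹ * star (ω k s)) from
            Finset.sum_congr rfl fun s _ => by rw [h1 k s]]
          simp only [hwdef, hφdef]
          rw [show ∑ s, ψ s p.1 * (sl⁻¹ * star (ω k s))
              = sl⁻¹ * ∑ s, star (ω k s) * ψ s p.1 from by
            rw [Finset.mul_sum]; exact Finset.sum_congr rfl fun s _ => by ring]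
          ring
  have hMGv : ∀ s, (outer (ψ s) ⊗ₖ (1 : Matrix β β ℂ)) *ᵥ Φ = fun p => sl⁻¹ * u s p := by
    intro s
    funext p
    show ∑ q : α × β, (outer (ψ s) ⊗ₖ (1 : Matrix β β ℂ)) p q * Φ q = sl⁻¹ * u s p
    calc ∑ q : α × β, (outer (ψ s) ⊗ₖ (1 : Matrix β β ℂ)) p q * Φ q
        = ∑ i, ∑ j, ((ψ s p.1 * star (ψ s i)) * (if p.2 = j then (1:ℂ) else 0)) * Φ (i, j) := by
          rw [Fintype.sum_prod_type]
          refine Finset.sum_congr rfl fun i _ => Finset.sum_congr rfl fun j _ => ?_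
            
          rw [Matrix.kroneckerMap_apply, Matrix.one_apply]
          rfl
      _ = ∑ i, (ψ s p.1 * star (ψ s i)) * Φ (i, p.2) := by
          refine Finset.sum_congr rfl fun i _ => ?_
          calc ∑ j, ((ψ s p.1 * star (ψ s i)) * (if p.2 = j then (1:ℂ) else 0)) * Φ (i, j)
              = ∑ j, (if p.2 = j then (ψ s p.1 * star (ψ s i)) * Φ (i, j) else 0) :=
                Finset.sum_congr rfl fun j _ => by by_cases h : p.2 = j <;> simp [h]
            _ = (ψ s p.1 * star (ψ s i)) * Φ (i, p.2) := by simp [Finset.sum_ite_eq]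
      _ = ψ s p.1 * ∑ i, star (ψ s i) * Φ (i, p.2) := by
          rw [Finset.mul_sum]
          exact Finset.sum_congr rfl fun i _ => by ring
      _ = ψ s p.1 * (sl⁻¹ * ∑ t, v t p.2 * ∑ i, star (ψ s i) * ψ t i) := by
          congr 1
          calc ∑ i, star (ψ s i) * Φ (i, p.2)
              = ∑ i, star (ψ s i) * (sl⁻¹ * ∑ t, ψ t i * v t p.2) := by simp only [hΦ]
            _ = ∑ i, star (ψ s i) * (sl⁻¹ * ∑ t, v t p.2 * ψ t i) := by
                refine Finset.sum_congr rfl fun i _ => ?_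
                congr 1
                congr 1
                exact Finset.sum_congr rfl fun t _ => mul_comm _ _
            _ = sl⁻¹ * ∑ t, v t p.2 * ∑ i, star (ψ s i) * ψ t i := sum_mul_lincomb _ _ _ _
      _ = sl⁻¹ * u s p := by
          rw [show ∑ t, v t p.2 * ∑ i, star (ψ s i) * ψ t i = v s p.2 from by
            calc ∑ t, v t p.2 * ∑ i, star (ψ s i) * ψ t i
                = ∑ t, v t p.2 * (if s = t then (1:ℂ) else 0) :=
                  Finset.sum_congr rfl fun t _ => by rw [hψ' s t]
              _ = v s p.2 := by simp]
          simp only [hudef]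
          ring
  -- the channels as scaled projections
  have hmeas : meas e (outer Φ) = (l:ℂ)⁻¹ • PB := by
    calc meas e (outer Φ)
        = ∑ k, ((1 : Matrix α α ℂ) ⊗ₖ outer (e k)) * outer Φ *
            ((1 : Matrix α α ℂ) ⊗ₖ outer (e k)) := rfl
      _ = ∑ k, outer (((1 : Matrix α α ℂ) ⊗ₖ outer (e k)) *ᵥ Φ) :=
          Finset.sum_congr rfl fun k _ => conj_outer _ (hMBherm k) Φ
      _ = ∑ k, ((sl⁻¹ * star sl⁻¹) • outer (w k)) := by
          refine Finset.sum_congr rfl fun k _ => ?_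
          rw [hMBv k]
          exact outer_smul' sl⁻¹ (w k)
      _ = (l:ℂ)⁻¹ • PB := by
          simp only [hslstarinv, hinv]
          rw [hPBdef, Finset.smul_sum]
  have hGmat : 𝒢 (outer Φ) = (l:ℂ)⁻¹ • PG := by
    rw [h𝒢]
    calc ∑ s, (outer (ψ s) ⊗ₖ (1 : Matrix β β ℂ)) * outer Φ *
          (outer (ψ s) ⊗ₖ (1 : Matrix β β ℂ))
        = ∑ s, outer ((outer (ψ s) ⊗ₖ (1 : Matrix β β ℂ)) *ᵥ Φ) :=
          Finset.sum_congr rfl fun s _ => conj_outer _ (hMGherm s) Φ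
      _ = ∑ s, ((sl⁻¹ * star sl⁻¹) • outer (u s)) := by
          refine Finset.sum_congr rfl fun s _ => ?_
          rw [hMGv s]
          exact outer_smul' sl⁻¹ (u s)
      _ = (l:ℂ)⁻¹ • PG := by
          simp only [hslstarinv, hinv]
          rw [hPGdef, Finset.smul_sum]
  have hB : (l:ℂ) • meas e (outer Φ) = PB := by
    rw [hmeas, smul_smul, mul_inv_cancel₀ hlC, one_smul]
  have hG : (l:ℂ) • 𝒢 (outer Φ) = PG := by
    rw [hGmat, smul_smul, mul_inv_cancel₀ hlC, one_smul]
  have hPBH : PBᴴ = PB := by rw [hPBdef]; exact sum_outer_conjTranspose w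
  have hPGH : PGᴴ = PG := by rw [hPGdef]; exact sum_outer_conjTranspose u
  have hPB2 : PB * PB = PB := by rw [hPBdef]; exact sum_outer_proj w hw_ortho
  have hPG2 : PG * PG = PG := by rw [hPGdef]; exact sum_outer_proj u hu_ortho
  have hGB : PG * PB = outer Φ := by
    rw [hPGdef, hPBdef, sum_outer_mul_sum_outer]
    calc ∑ s, ∑ k, (∑ q, star (u s q) * w k q) • Matrix.vecMulVec (u s) (star (w k))
        = ∑ s, ∑ k, (l:ℂ)⁻¹ • Matrix.vecMulVec (u s) (star (w k)) :=
          Finset.sum_congr rfl fun s _ => Finset.sum_congr rfl fun k _ => by rw [huw s k]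
      _ = outer Φ := by
          ext p r
          simp only [Matrix.sum_apply, Matrix.smul_apply, Matrix.vecMulVec_apply, Pi.star_apply,
            smul_eq_mul, outer]
          have hr : star (Φ r) = sl⁻¹ * ∑ k, star (w k r) := by
            rw [hΦu r, star_mul', hslstarinv, ← hsumw r, star_sum]
          rw [hΦu p, hr]
          exact (calc (sl⁻¹ * ∑ s, u s p) * (sl⁻¹ * ∑ k, star (w k r))
              = (sl⁻¹ * sl⁻¹) * ((∑ s, u s p) * (∑ k, star (w k r))) := by ring
            _ = (l:ℂ)⁻¹ * ∑ s, ∑ k, u s p * star (w k r) := by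
                rw [hinv, Finset.sum_mul_sum]
            _ = ∑ s, ∑ k, (l:ℂ)⁻¹ * (u s p * star (w k r)) := by
                rw [Finset.mul_sum]
                exact Finset.sum_congr rfl fun s _ => by rw [Finset.mul_sum]).symm
  have hPGΦ : PG *ᵥ Φ = Φ := by
    have hΦeq : Φ = sl⁻¹ • (fun q => ∑ t, u t q) := by
      funext q
      rw [hΦu q]
      rfl
    rw [hΦeq, Matrix.mulVec_smul, hPGdef, proj_fixes u hu_ortho]
  have hPBΦ : PB *ᵥ Φ = Φ := by
    have hΦeq : Φ = sl⁻¹ • (fun q => ∑ t, w t q) := by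
      funext q
      rw [hΦu q, ← hsumw q]
      rfl
    rw [hΦeq, Matrix.mulVec_smul, hPBdef, proj_fixes w hw_ortho]
  have hPGouter : PG * outer Φ = outer Φ := by
    rw [outer_def, mul_vecMulVec, hPGΦ]
  have houterPG : outer Φ * PG = outer Φ := by
    have h := congrArg Matrix.conjTranspose hPGouter
    rw [Matrix.conjTranspose_mul, outer_conjTranspose, hPGH] at h
    exact h
  refine ⟨?_, ?_, ?_, ?_, ?_, ?_⟩
  · show ((l:ℂ) • meas e (outer Φ))ᴴ = (l:ℂ) • meas e (outer Φ)
    rw [hB]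
    exact hPBH
  · rw [hB]
    exact hPB2
  · show ((l:ℂ) • 𝒢 (outer Φ))ᴴ = (l:ℂ) • 𝒢 (outer Φ)
    rw [hG]
    exact hPGH
  · rw [hG]
    exact hPG2
  · rw [hB, hG]
    apply le_antisymm
    · intro x hx
      rw [Submodule.mem_inf] at hx
      obtain ⟨hx1, hx2⟩ := hx
      obtain ⟨y, hy⟩ := hx1
      obtain ⟨z, hz⟩ := hx2
      rw [Matrix.toLin'_apply] at hy hz
      have hBx : PB *ᵥ x = x := by rw [← hy, Matrix.mulVec_mulVec, hPB2]
      have hGx : PG *ᵥ x = x := by rw [← hz, Matrix.mulVec_mulVec, hPG2]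
      rw [Submodule.mem_span_singleton]
      refine ⟨star Φ ⬝ᵥ x, ?_⟩
      calc (star Φ ⬝ᵥ x) • Φ = outer Φ *ᵥ x := (outer_mulVec Φ x).symm
        _ = (PG * PB) *ᵥ x := by rw [hGB]
        _ = x := by rw [← Matrix.mulVec_mulVec, hBx, hGx]
    · rw [Submodule.span_le, Set.singleton_subset_iff, SetLike.mem_coe, Submodule.mem_inf]
      exact ⟨⟨Φ, by rw [Matrix.toLin'_apply]; exact hPBΦ⟩,
        ⟨Φ, by rw [Matrix.toLin'_apply]; exact hPGΦ⟩⟩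
  · have hcpos : (0:ℝ) < (l:ℝ)⁻¹ := by
      rw [inv_pos]
      exact_mod_cast hl
    have hherm : ((l:ℂ)⁻¹ • PG).IsHermitian := by
      show ((l:ℂ)⁻¹ • PG)ᴴ = (l:ℂ)⁻¹ • PG
      rw [Matrix.conjTranspose_smul, hPGH]
      norm_num
    have hsq2 : ((l:ℂ)⁻¹ • PG) * ((l:ℂ)⁻¹ • PG) = (((l:ℝ)⁻¹ : ℝ) : ℂ) • ((l:ℂ)⁻¹ • PG) := by
      rw [Matrix.smul_mul, Matrix.mul_smul, hPG2, smul_smul, smul_smul]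
      congr 1
      push_cast
      ring
    have hms := mSqrt_of_proj hherm hcpos hsq2
    rw [Real.sqrt_inv] at hms
    have hsqrtG : mSqrt (𝒢 (outer Φ)) = (sl * (l:ℂ)⁻¹) • PG := by
      rw [hGmat, hms, smul_smul]
      congr 1
      rw [Complex.ofReal_inv, inv_inv, hsldef]
    rw [hsqrtG, hmeas]
    simp only [Matrix.smul_mul, Matrix.mul_smul, smul_smul]
    rw [hGB, houterPG]
    congr 1
    rw [show sl * (l:ℂ)⁻¹ * ((l:ℂ)⁻¹ * (sl * (l:ℂ)⁻¹))
        = (sl * sl) * ((l:ℂ)⁻¹ * (l:ℂ)⁻¹ * (l:ℂ)⁻¹) from by ring, hsl_sq, pow_two, mul_inv]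
    field_simp

end DenseCoding
end

section
/- Suppose the Gram matrix J(V) of unit vectors |v_1⟩,…,|v_l⟩ satisfies (1/l)·J(V) = Σ_k P_K(k) Z_k |+⟩⟨+| Z_k† for some probability distribution P_K and diagonal unitaries Z_k = Σ_λ e^{iθ_{λ,k}}|λ⟩⟨λ|, where |+⟩ = (1/√l)Σ_λ|λ⟩. Then the Hadamard-product channel Γ_{J(V)}(ρ) = J(V)⊙ρ equals the probabilistic unitary channel ρ ↦ Σ_k P_K(k) Z_k ρ Z_k†, and conversely. -/
open scoped Matrix Kronecker ComplexOrder
open Matrix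

namespace DenseCoding

variable {n : Type*}

lemma diagPhase_conj_apply {l κ : Type*} [Fintype l] [DecidableEq l] (θ : l → κ → ℝ) (k : κ)
    (M : Matrix l l ℂ) (i j : l) :
    (diagPhase θ k * M * (diagPhase θ k)ᴴ) i j =
      Complex.exp (Complex.I * θ i k) * M i j *
        star (Complex.exp (Complex.I * θ j k)) := by
  simp [diagPhase, Matrix.diagonal_conjTranspose, Matrix.mul_diagonal,
    Matrix.diagonal_mul]

/-- (1/l)J(V) = Σ_k P_K(k) Z_k|+⟩⟨+|Z_k† holds if and only if the
Hadamard-product channel J(V)⊙· equals the probabilistic incoherent-unitary channel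
ρ ↦ Σ_k P_K(k) Z_k ρ Z_k†. -/
theorem hadamard_eq_prob_incoherent_unitary_iff
    {l : ℕ} (hl : 0 < l) {β κ : Type*} [Fintype β] [Fintype κ]
    (v : Fin l → β → ℂ) (hv : ∀ j, ∑ k, v j k * star (v j k) = 1)
    (P : κ → ℝ) (hP : ∀ k, 0 ≤ P k) (hP1 : ∑ k, P k = 1)
    (θ : Fin l → κ → ℝ) :
    ((l : ℂ)⁻¹ • gram v = ∑ k, (P k : ℂ) • (diagPhase θ k * plusMat l * (diagPhase θ k)ᴴ)) ↔
    (∀ ρ : Matrix (Fin l) (Fin l) ℂ,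
      Matrix.hadamard (gram v) ρ = ∑ k, (P k : ℂ) • (diagPhase θ k * ρ * (diagPhase θ k)ᴴ)) := by
  have hl0 : (l : ℂ) ≠ 0 := Nat.cast_ne_zero.mpr hl.ne'
  have key : ∀ i j : Fin l,
      (((l : ℂ)⁻¹ • gram v = ∑ k, (P k : ℂ) •
          (diagPhase θ k * plusMat l * (diagPhase θ k)ᴴ)) →
        gram v i j = ∑ k, (P k : ℂ) * (Complex.exp (Complex.I * θ i k) *
          star (Complex.exp (Complex.I * θ j k)))) := by
    intro i j h
    have h' := congrFun (congrFun h i) j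
    simp only [Matrix.smul_apply, Matrix.sum_apply, diagPhase_conj_apply,
      smul_eq_mul] at h'
    have h2 : (∑ k, (P k : ℂ) * (Complex.exp (Complex.I * θ i k) * plusMat l i j *
        star (Complex.exp (Complex.I * θ j k)))) =
        (l : ℂ)⁻¹ * ∑ k, (P k : ℂ) * (Complex.exp (Complex.I * θ i k) *
          star (Complex.exp (Complex.I * θ j k))) := by
      rw [Finset.mul_sum]
      refine Finset.sum_congr rfl fun k _ => ?_
      simp only [plusMat, Matrix.of_apply]
      ring
    rw [h2] at h'
    exact mul_left_cancel₀ (inv_ne_zero hl0) h'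
  constructor
  · intro h ρ
    ext i j
    simp only [Matrix.hadamard_apply, Matrix.sum_apply, Matrix.smul_apply,
      diagPhase_conj_apply, smul_eq_mul]
    rw [key i j h, Finset.sum_mul]
    exact Finset.sum_congr rfl fun k _ => by ring
  · intro h
    ext i j
    have h' := congrFun (congrFun (h (Matrix.of fun _ _ => 1)) i) j
    simp only [Matrix.hadamard_apply, Matrix.sum_apply, Matrix.smul_apply,
      diagPhase_conj_apply, smul_eq_mul, Matrix.of_apply, mul_one] at h'
    simp only [Matrix.smul_apply, Matrix.sum_apply, diagPhase_conj_apply,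
      smul_eq_mul]
    rw [h', Finset.mul_sum]
    refine Finset.sum_congr rfl fun k _ => ?_
    simp only [plusMat, Matrix.of_apply]
    ring

end DenseCoding
end

section
/- Let |v_1⟩, |v_2⟩ be any two unit vectors in a Hilbert space of dimension ≥ 2. Then there exist an orthonormal pair |e_1⟩, |e_2⟩ and real numbers θ, θ' such that |v_1⟩ = (1/√2)(|e_1⟩ + |e_2⟩) and |v_2⟩ = (1/√2)(e^{i(θ'+θ)}|e_1⟩ + e^{i(θ'-θ)}|e_2⟩), where e^{iθ'}cos θ = ⟨v_1|v_2⟩. -/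
open scoped Matrix Kronecker ComplexOrder
open Matrix

namespace DenseCoding

variable {n : Type*}

noncomputable def toE {β : Type*} [Fintype β] (x : β → ℂ) : EuclideanSpace ℂ β :=
  (WithLp.equiv 2 (β → ℂ)).symm x

private lemma expand_sum {β : Type*} [Fintype β] (x y : β → ℂ) (p q r t : ℂ) :
    ∑ i, star (p * x i + q * y i) * (r * x i + t * y i)
      = star p * r * (∑ i, star (x i) * x i) + star p * t * (∑ i, star (x i) * y i)
        + star q * r * (∑ i, star (y i) * x i) + star q * t * (∑ i, star (y i) * y i) := by
  simp only [Finset.mul_sum]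
  rw [← Finset.sum_add_distrib, ← Finset.sum_add_distrib, ← Finset.sum_add_distrib]
  refine Finset.sum_congr rfl fun i _ => ?_
  simp only [star_add, star_mul']
  ring

private lemma inner_eq_sum' {β : Type*} [Fintype β] (x y : β → ℂ) :
    (inner (𝕜 := ℂ) (toE x) (toE y)) = ∑ i, star (x i) * y i := by
  simp [toE, PiLp.inner_apply, RCLike.inner_apply, mul_comm, Complex.star_def]

private lemma norm_toE_one {β : Type*} [Fintype β] (x : β → ℂ)
    (hx : ∑ i, star (x i) * x i = 1) : ‖toE x‖ = 1 := by
  have h := inner_self_eq_norm_sq_to_K (𝕜 := ℂ) (toE x)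
  rw [inner_eq_sum', hx] at h
  have h2 : ‖toE x‖ ^ 2 = 1 := by exact_mod_cast congrArg Complex.re h.symm
  nlinarith [norm_nonneg (toE x)]


set_option maxHeartbeats 2000000 in
/-- any two unit vectors admit a common unbiased orthonormal pair
representation with equal amplitudes 1/√2 and phases only, with
e^{iθ'}cos θ = ⟨v₁|v₂⟩ (the l = 2 case of q-memory uselessness). -/
theorem two_unit_vectors_unbiased_basis
    {β : Type*} [Fintype β] (hdim : 2 ≤ Fintype.card β)
    (v₁ v₂ : β → ℂ)
    (hv₁ : ∑ i, star (v₁ i) * v₁ i = 1) (hv₂ : ∑ i, star (v₂ i) * v₂ i = 1) :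
    ∃ (e₁ e₂ : β → ℂ) (θ θ' : ℝ),
      (∑ i, star (e₁ i) * e₁ i = 1) ∧ (∑ i, star (e₂ i) * e₂ i = 1) ∧
      (∑ i, star (e₁ i) * e₂ i = 0) ∧
      (v₁ = fun i => (↑(Real.sqrt 2) : ℂ)⁻¹ * (e₁ i + e₂ i)) ∧
      (v₂ = fun i => (↑(Real.sqrt 2) : ℂ)⁻¹ *
        (Complex.exp (Complex.I * (θ' + θ)) * e₁ i +
         Complex.exp (Complex.I * (θ' - θ)) * e₂ i)) ∧
      Complex.exp (Complex.I * θ') * (Real.cos θ : ℂ) = ∑ i, star (v₁ i) * v₂ i := by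
  classical
  set r : ℂ := (Real.sqrt 2 : ℂ) with hrdef
  have hr2 : r ^ 2 = 2 := by
    rw [hrdef, ← Complex.ofReal_pow, Real.sq_sqrt (by norm_num : (0:ℝ) ≤ 2)]; norm_num
  have hr0 : r ≠ 0 := by
    intro h; rw [h] at hr2; norm_num at hr2
  set c : ℂ := ∑ i, star (v₁ i) * v₂ i with hc
  have hc21 : ∑ i, star (v₂ i) * v₁ i = star c := by
    rw [hc, star_sum]
    exact Finset.sum_congr rfl fun i _ => by simp [Complex.star_def, mul_comm]
  have hn1 : ‖toE v₁‖ = 1 := norm_toE_one v₁ hv₁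
  have hn2 : ‖toE v₂‖ = 1 := norm_toE_one v₂ hv₂
  have habs : ‖c‖ ≤ 1 := by
    have h := norm_inner_le_norm (𝕜 := ℂ) (toE v₁) (toE v₂)
    rwa [inner_eq_sum', ← hc, hn1, hn2, mul_one] at h
  set a : ℝ := ‖c‖ with hadef
  have ha0 : 0 ≤ a := norm_nonneg c
  set θ : ℝ := Real.arccos a with hθdef
  set θ' : ℝ := c.arg with hθ'def
  have hcos : Real.cos θ = a := Real.cos_arccos (by linarith) habs
  set d : ℂ := Complex.exp (Complex.I * θ') with hddef
  have hd0 : d ≠ 0 := Complex.exp_ne_zero _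
  have hca : c = d * a := by
    rw [hddef, hθ'def, hadef, mul_comm Complex.I]
    rw [mul_comm]
    exact_mod_cast (Complex.norm_mul_exp_arg_mul_I c).symm
  have hkey : Complex.exp (Complex.I * θ') * (Real.cos θ : ℂ) = c := by
    rw [hcos, ← hddef, ← hca]
  have hsd : (starRingEnd ℂ) d = d⁻¹ := by
    rw [eq_inv_of_mul_eq_one_left (a := (starRingEnd ℂ) d) (b := d) ?_]
    rw [hddef, ← Complex.exp_conj]
    simp only [_root_.map_mul, Complex.conj_I, Complex.conj_ofReal]
    rw [← Complex.exp_add]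
    ring_nf
    exact Complex.exp_zero
  have hrstar : (starRingEnd ℂ) r = r := by rw [hrdef]; exact Complex.conj_ofReal _
  clear_value r c a θ θ' d
  by_cases hdeg : a = 1
  · -- degenerate case: v₂ is a unit multiple of v₁
    have hne1 : toE v₁ ≠ 0 := fun h => by rw [h, norm_zero] at hn1; norm_num at hn1
    have hne2 : toE v₂ ≠ 0 := fun h => by rw [h, norm_zero] at hn2; norm_num at hn2
    have hcs : ‖(inner (𝕜 := ℂ) (toE v₁) (toE v₂) : ℂ)‖ = ‖toE v₁‖ * ‖toE v₂‖ := by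
      rw [inner_eq_sum', ← hc, hn1, hn2, mul_one, ← hadef, hdeg]
    obtain ⟨t, ht0, htv⟩ := (norm_inner_eq_norm_iff hne1 hne2).1 hcs
    have htc : t = c := by
      have h := inner_eq_sum' v₁ v₂
      rw [htv, inner_smul_right, inner_eq_sum' v₁ v₁, hv₁, mul_one] at h
      rw [h, hc]
    have hpt : ∀ i, v₂ i = c * v₁ i := by
      intro i
      have h := congrArg (fun z => (WithLp.equiv 2 (β → ℂ)) z i) htv
      simpa [toE, htc] using h
    have hcd : d = c := by rw [hca, hdeg]; simp
    have hfr : 0 < Module.finrank ℂ ((ℂ ∙ (toE v₁))ᗮ : Submodule ℂ (EuclideanSpace ℂ β)) := by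
      have h1 : Module.finrank ℂ (ℂ ∙ (toE v₁)) = 1 := finrank_span_singleton hne1
      have h2 := Submodule.finrank_add_finrank_orthogonal (K := (ℂ ∙ (toE v₁)))
      have h3 : Module.finrank ℂ (EuclideanSpace ℂ β) = Fintype.card β :=
        finrank_euclideanSpace
      omega
    obtain ⟨u₀, hu₀K, hu₀ne⟩ := Submodule.exists_mem_ne_zero_of_ne_bot
      (p := (ℂ ∙ (toE v₁))ᗮ) (by intro h; rw [h] at hfr; simp at hfr)
    have hun0 : ‖u₀‖ ≠ 0 := norm_ne_zero_iff.2 hu₀ne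
    have hun0' : (‖u₀‖ : ℂ) ≠ 0 := Complex.ofReal_ne_zero.2 hun0
    set u : EuclideanSpace ℂ β := ((‖u₀‖ : ℂ))⁻¹ • u₀ with hudef
    set u' : β → ℂ := fun i => (WithLp.equiv 2 (β → ℂ)) u i with hu'def
    have hu'E : toE u' = u := rfl
    have h1u : ∑ i, star (v₁ i) * u' i = 0 := by
      rw [← inner_eq_sum', hu'E, hudef, inner_smul_right]
      have h0 : (inner (𝕜 := ℂ) (toE v₁) u₀ : ℂ) = 0 :=
        (Submodule.mem_orthogonal _ u₀).1 hu₀K (toE v₁) (Submodule.mem_span_singleton_self _)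
      rw [h0, mul_zero]
    have hu1 : ∑ i, star (u' i) * v₁ i = 0 := by
      have h := congrArg star h1u
      rw [star_sum] at h
      simpa [Complex.star_def, mul_comm] using h
    have huu : ∑ i, star (u' i) * u' i = 1 := by
      rw [← inner_eq_sum', hu'E, hudef, inner_smul_left, inner_smul_right,
        inner_self_eq_norm_sq_to_K]
      simp only [_root_.map_inv₀, Complex.conj_ofReal]
      field_simp
      rfl
    refine ⟨fun i => r⁻¹ * v₁ i + r⁻¹ * u' i, fun i => r⁻¹ * v₁ i + (-r⁻¹) * u' i,
      0, θ', ?_, ?_, ?_, ?_, ?_, ?_⟩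
    · show ∑ i, star (r⁻¹ * v₁ i + r⁻¹ * u' i) * (r⁻¹ * v₁ i + r⁻¹ * u' i) = 1
      rw [expand_sum, hv₁, huu, h1u, hu1]
      simp only [star_inv₀, Complex.star_def, hrstar, mul_zero, mul_one, add_zero, zero_add]
      field_simp
      linear_combination -hr2
    · show ∑ i, star (r⁻¹ * v₁ i + (-r⁻¹) * u' i) * (r⁻¹ * v₁ i + (-r⁻¹) * u' i) = 1
      rw [expand_sum, hv₁, huu, h1u, hu1]
      simp only [star_inv₀, star_neg, Complex.star_def, hrstar, mul_zero, mul_one, add_zero, zero_add]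
      field_simp
      linear_combination -hr2
    · show ∑ i, star (r⁻¹ * v₁ i + r⁻¹ * u' i) * (r⁻¹ * v₁ i + (-r⁻¹) * u' i) = 0
      rw [expand_sum, hv₁, huu, h1u, hu1]
      simp only [star_inv₀, star_neg, Complex.star_def, hrstar, mul_zero, mul_one, add_zero, zero_add]
      ring
    · funext i
      show v₁ i = r⁻¹ * ((r⁻¹ * v₁ i + r⁻¹ * u' i) + (r⁻¹ * v₁ i + (-r⁻¹) * u' i))
      field_simp
      linear_combination (v₁ i) * hr2
    · funext i
      show v₂ i = r⁻¹ * (Complex.exp (Complex.I * (↑θ' + ↑(0:ℝ))) * (r⁻¹ * v₁ i + r⁻¹ * u' i)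
        + Complex.exp (Complex.I * (↑θ' - ↑(0:ℝ))) * (r⁻¹ * v₁ i + (-r⁻¹) * u' i))
      rw [hpt i]
      simp only [Complex.ofReal_zero, add_zero, sub_zero, ← hddef, hcd]
      field_simp
      linear_combination (c * v₁ i) * hr2
    · show Complex.exp (Complex.I * ↑θ') * ((Real.cos 0 : ℝ) : ℂ) = c
      rw [Real.cos_zero, ← hddef, hcd]
      norm_num
  · have ha1 : a < 1 := lt_of_le_of_ne habs hdeg
    obtain ⟨s, hsdef⟩ : ∃ s : ℝ, s = Real.sin θ := ⟨_, rfl⟩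
    have hs_eq : s = Real.sqrt (1 - a^2) := by rw [hsdef, hθdef, Real.sin_arccos]
    have hs_pos : 0 < s := by
      rw [hs_eq]; apply Real.sqrt_pos.2; nlinarith
    have hs0 : (s:ℂ) ≠ 0 := Complex.ofReal_ne_zero.2 (ne_of_gt hs_pos)
    have hs2 : (s:ℂ)^2 = 1 - (a:ℂ)^2 := by
      have h : s^2 = 1 - a^2 := by
        rw [hs_eq]; exact Real.sq_sqrt (by nlinarith)
      exact_mod_cast congrArg (Complex.ofReal) h
    obtain ⟨E, hEdef⟩ : ∃ E : ℂ, E = (a:ℂ) + (s:ℂ) * Complex.I := ⟨_, rfl⟩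
    obtain ⟨E', hE'def⟩ : ∃ E' : ℂ, E' = (a:ℂ) - (s:ℂ) * Complex.I := ⟨_, rfl⟩
    have hEexp : Complex.exp (Complex.I * (θ:ℝ)) = E := by
      rw [mul_comm, Complex.exp_mul_I, ← Complex.ofReal_cos, ← Complex.ofReal_sin, hcos,
        hEdef, ← hsdef]
    have hE'exp : Complex.exp (-(Complex.I * (θ:ℝ))) = E' := by
      rw [show -(Complex.I * (θ:ℝ)) = ((-θ : ℝ):ℂ) * Complex.I by push_cast; ring,
        Complex.exp_mul_I, ← Complex.ofReal_cos, ← Complex.ofReal_sin, Real.cos_neg,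
        Real.sin_neg, hcos, hE'def, ← hsdef]
      push_cast
      ring
    have hstarE : (starRingEnd ℂ) E = E' := by
      rw [hEdef, hE'def]; simp [_root_.map_mul, Complex.conj_I, Complex.conj_ofReal]; ring
    have hstarE' : (starRingEnd ℂ) E' = E := by
      rw [hEdef, hE'def]; simp [_root_.map_mul, Complex.conj_I, Complex.conj_ofReal]
    obtain ⟨k, hkdef⟩ : ∃ k : ℂ, k = r / (2 * Complex.I * s) := ⟨_, rfl⟩
    obtain ⟨sd, hsddef⟩ : ∃ sd : ℂ, sd = (starRingEnd ℂ) d := ⟨_, rfl⟩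
    have hk1 : k * (2 * Complex.I * (s:ℂ)) = r := by
      rw [hkdef]; field_simp
    have hkstar : (starRingEnd ℂ) k = -k := by
      rw [hkdef, _root_.map_div₀]
      simp only [_root_.map_mul, Complex.conj_I, Complex.conj_ofReal, hrstar, _root_.map_ofNat,
        mul_neg, neg_mul, div_neg]
    have hdsd : d * sd = 1 := by
      rw [hsddef, hsd]; field_simp
    have hstarsd : (starRingEnd ℂ) sd = d := by
      rw [hsddef, RingHomInvPair.comp_apply_eq]
    have hplus : Complex.exp (Complex.I * ((θ':ℝ) + (θ:ℝ))) = d * E := by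
      rw [mul_add, Complex.exp_add, ← hddef, hEexp]
    have hminus : Complex.exp (Complex.I * ((θ':ℝ) - (θ:ℝ))) = d * E' := by
      rw [mul_sub, sub_eq_add_neg, Complex.exp_add, ← hddef, hE'exp]
    have hI0 : Complex.I ≠ 0 := Complex.I_ne_zero
    have hstarc : (starRingEnd ℂ) c = sd * a := by
      rw [hca, _root_.map_mul, Complex.conj_ofReal, hsddef]
    refine ⟨fun i => (-(k * E')) * v₁ i + (k * sd) * v₂ i,
            fun i => (k * E) * v₁ i + (-(k * sd)) * v₂ i, θ, θ', ?_, ?_, ?_, ?_, ?_, hkey⟩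
    · show ∑ i, star ((-(k * E')) * v₁ i + (k * sd) * v₂ i) *
        ((-(k * E')) * v₁ i + (k * sd) * v₂ i) = 1
      rw [expand_sum, hv₁, hv₂, ← hc, hc21, hca]
      simp only [star_neg, star_mul', Complex.star_def, _root_.map_div₀, _root_.map_mul, _root_.map_sub, _root_.map_add,
        _root_.map_ofNat, Complex.conj_I, Complex.conj_ofReal, ← hsddef, hrstar, hstarE, hstarE',
        hstarsd, hstarc, hkstar, hEdef, hE'def]
      linear_combination (1/2 : ℂ) * hr2 + (r/2 + k*Complex.I*((s:ℝ):ℂ)) * hk1 + (2*k^2*((a:ℝ):ℂ)^2 - k^2) * hdsd + (-(k^2*((s:ℝ):ℂ)^2)) * Complex.I_sq + k^2 * hs2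
    · show ∑ i, star ((k * E) * v₁ i + (-(k * sd)) * v₂ i) *
        ((k * E) * v₁ i + (-(k * sd)) * v₂ i) = 1
      rw [expand_sum, hv₁, hv₂, ← hc, hc21, hca]
      simp only [star_neg, star_mul', Complex.star_def, _root_.map_div₀, _root_.map_mul, _root_.map_sub, _root_.map_add,
        _root_.map_ofNat, Complex.conj_I, Complex.conj_ofReal, ← hsddef, hrstar, hstarE, hstarE',
        hstarsd, hstarc, hkstar, hEdef, hE'def]
      linear_combination (1/2 : ℂ) * hr2 + (r/2 + k*Complex.I*((s:ℝ):ℂ)) * hk1 + (2*k^2*((a:ℝ):ℂ)^2 - k^2) * hdsd + (-(k^2*((s:ℝ):ℂ)^2)) * Complex.I_sq + k^2 * hs2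
    · show ∑ i, star ((-(k * E')) * v₁ i + (k * sd) * v₂ i) *
        ((k * E) * v₁ i + (-(k * sd)) * v₂ i) = 0
      rw [expand_sum, hv₁, hv₂, ← hc, hc21, hca]
      simp only [star_neg, star_mul', Complex.star_def, _root_.map_div₀, _root_.map_mul, _root_.map_sub, _root_.map_add,
        _root_.map_ofNat, Complex.conj_I, Complex.conj_ofReal, ← hsddef, hrstar, hstarE, hstarE',
        hstarsd, hstarc, hkstar, hEdef, hE'def]
      linear_combination (k^2 - 2*k^2*((a:ℝ):ℂ)*(((a:ℝ):ℂ) + ((s:ℝ):ℂ)*Complex.I)) * hdsd + k^2*((s:ℝ):ℂ)^2 * Complex.I_sq + (-(k^2)) * hs2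
    · funext i
      show v₁ i = r⁻¹ * (((-(k * E')) * v₁ i + (k * sd) * v₂ i) +
        ((k * E) * v₁ i + (-(k * sd)) * v₂ i))
      have hkEE : k * (E - E') = r := by
        rw [hEdef, hE'def]; linear_combination hk1
      field_simp
      linear_combination (-(v₁ i)) * hkEE
    · funext i
      show v₂ i = r⁻¹ * (Complex.exp (Complex.I * ((θ':ℝ) + (θ:ℝ))) *
          ((-(k * E')) * v₁ i + (k * sd) * v₂ i) +
        Complex.exp (Complex.I * ((θ':ℝ) - (θ:ℝ))) *
          ((k * E) * v₁ i + (-(k * sd)) * v₂ i))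
      have hkEE : k * (E - E') = r := by
        rw [hEdef, hE'def]; linear_combination hk1
      rw [hplus, hminus]
      field_simp
      linear_combination (-(d * sd * v₂ i)) * hkEE + (-(r * v₂ i)) * hdsd

end DenseCoding
end

section
/- For every l ≥ 4, there exist unit vectors |v_1⟩,…,|v_l⟩ in C² whose Gram matrix J(V) satisfies: there is NO probability distribution P_K on a finite set and no diagonal unitaries Z_k such that (1/l)J(V) = Σ_k P_K(k) Z_k|+⟩⟨+|Z_k†. Explicitly, take v_{j,1} = 1/j, v_{j,2} = i^j √(1 - 1/j²) for j ≤ 4 and v_{j,1} = 1, v_{j,2} = 0 for j > 4; then the four vectors ( \overline{v_{j,t}} v_{j,s} )_{j=1}^l for t,s ∈ {1,2} are linearly independent in C^l, which implies the obstruction. -/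
open scoped Matrix Kronecker ComplexOrder
open Matrix

namespace DenseCoding

variable {n : Type*}

lemma DQM_expand1 (d : Fin 4 → ℂ) (w : Fin 4 → ℂ) :
    (∑ m, d m * w m) * star (∑ m, d m * w m)
      = ∑ m, ∑ m', (d m * star (d m')) * (w m * star (w m')) := by
  rw [star_sum, Finset.sum_mul_sum]
  refine Finset.sum_congr rfl fun m _ => Finset.sum_congr rfl fun m' _ => ?_
  rw [star_mul']; ring

lemma DQM_expand {ι : Type*} [Fintype ι] (d : Fin 4 → ℂ) (w : ι → Fin 4 → ℂ) :
    ∑ t, (∑ m, d m * w t m) * star (∑ m, d m * w t m)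
      = ∑ m, ∑ m', (d m * star (d m')) * (∑ t, w t m * star (w t m')) := by
  rw [Finset.sum_congr rfl fun t _ => DQM_expand1 d (w t), Finset.sum_comm]
  refine Finset.sum_congr rfl fun m _ => ?_
  rw [Finset.sum_comm]
  refine Finset.sum_congr rfl fun m' _ => ?_
  rw [Finset.mul_sum]

lemma DQM_endgame (p q r : ℝ) (hp : 0 < p) (hq : 0 < q) (hr : 0 < r)
    (hp2 : p * p = 3/4) (hq2 : q * q = 8/9) (hr2 : r * r = 15/16)
    (z0 z1 z2 z3 : ℂ)
    (u0 : z0 * star z0 = 1) (u1 : z1 * star z1 = 1)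
    (u2 : z2 * star z2 = 1) (u3 : z3 * star z3 = 1)
    (E1 : ((r:ℂ)/2 + (p:ℂ)/4) * z0 - (r:ℂ) * z1 - (p:ℂ) * z3 = 0)
    (E2 : ((p:ℂ)/3 - ((q:ℂ)/2) * Complex.I) * z0 + (q:ℂ) * Complex.I * z1 - (p:ℂ) * z2 = 0) :
    False := by
  have hpC : (p:ℂ) ≠ 0 := by exact_mod_cast hp.ne'
  have hqC : (q:ℂ) ≠ 0 := by exact_mod_cast hq.ne'
  have hp2C : (p:ℂ) * p = 3/4 := by
    have := congrArg (Complex.ofReal) hp2; push_cast at this; exact_mod_cast this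
  have hq2C : (q:ℂ) * q = 8/9 := by
    have := congrArg (Complex.ofReal) hq2; push_cast at this; exact_mod_cast this
  have hr2C : (r:ℂ) * r = 15/16 := by
    have := congrArg (Complex.ofReal) hr2; push_cast at this; exact_mod_cast this
  obtain ⟨b, hb⟩ : ∃ b : ℂ, b = (z0/2 - z1)/(p:ℂ) := ⟨_, rfl⟩
  have hz1 : z1 = z0/2 - (p:ℂ) * b := by
    rw [hb]; field_simp; ring
  have hz3 : z3 = z0/4 + (r:ℂ) * b := by
    rw [hb]; field_simp; linear_combination (-8:ℂ) * E1
  have hz2 : z2 = z0/3 - (q:ℂ) * Complex.I * b := by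
    rw [hb]; field_simp; linear_combination (-6:ℂ) * E2
  obtain ⟨c0, hc0⟩ : ∃ c : ℂ, c = star z0 := ⟨_, rfl⟩
  obtain ⟨b', hb'⟩ : ∃ c : ℂ, c = star b := ⟨_, rfl⟩
  rw [← hc0] at u0
  have hc1 : star z1 = c0/2 - (p:ℂ) * b' := by
    rw [hz1]; simp [star_sub, star_div₀, star_mul', Complex.conj_ofReal, ← hc0, ← hb']
  have hc2 : star z2 = c0/3 + (q:ℂ) * Complex.I * b' := by
    rw [hz2]; simp [star_sub, star_div₀, star_mul', Complex.conj_ofReal, Complex.conj_I, ← hc0,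
      ← hb']
    try ring
  have hc3 : star z3 = c0/4 + (r:ℂ) * b' := by
    rw [hz3]; simp [star_add, star_div₀, star_mul', Complex.conj_ofReal, ← hc0, ← hb']
  rw [hc1] at u1; rw [hz1] at u1
  rw [hc2] at u2; rw [hz2] at u2
  rw [hc3] at u3; rw [hz3] at u3
  have hcoef : ((r:ℂ)/4 + 5*(p:ℂ)/8) ≠ 0 := by
    have h0 : ((r/4 + 5*p/8 : ℝ) : ℂ) ≠ 0 := by
      exact_mod_cast (by positivity : (0:ℝ) < r/4 + 5*p/8).ne'
    convert h0 using 2 <;> push_cast <;> ring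
  have hT : c0 * b + z0 * b' = 0 := by
    have h : ((r:ℂ)/4 + 5*(p:ℂ)/8) * (c0 * b + z0 * b') = 0 := by
      linear_combination u3 - (5/4:ℂ)*u1 + (1/4:ℂ)*u0 + (5/4:ℂ)*(b*b')*hp2C - (b*b')*hr2C
    exact (mul_eq_zero.mp h).resolve_left hcoef
  have hs : b * b' = 1 := by
    linear_combination (4/3:ℂ)*u1 - (1/3:ℂ)*u0 + (2/3:ℂ)*(p:ℂ)*hT - (4/3:ℂ)*(b*b')*hp2C
  have hD : z0 * b' - c0 * b = 0 := by
    have h : (q:ℂ) * Complex.I / 3 * (z0 * b' - c0 * b) = 0 := by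
      linear_combination u2 - (1/9:ℂ)*u0 - (b*b')*hq2C - (8/9:ℂ)*hs + (q:ℂ)*(q:ℂ)*b*b'*Complex.I_sq
    have hne : (q:ℂ) * Complex.I / 3 ≠ 0 := by
      simp [hqC, Complex.I_ne_zero]
    exact (mul_eq_zero.mp h).resolve_left hne
  have ht : c0 * b = 0 := by linear_combination (1/2 : ℂ) * hT - (1/2 : ℂ) * hD
  have hbad : (1:ℂ) = 0 := by
    linear_combination (-(b*b'))*u0 - hs + (z0*b')*ht
  exact one_ne_zero hbad


/-- for every l ≥ 4 the explicit family of unit vectors in ℂ²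
(v_{j,1} = 1/j, v_{j,2} = i^j√(1-1/j²) for j ≤ 4; v_{j,1} = 1, v_{j,2} = 0 for j > 4)
has linearly independent products ( \bar v_{j,t} v_{j,s} )_j, and its Gram matrix admits
NO decomposition (1/l)J(V) = Σ_k P_K(k) Z_k|+⟩⟨+|Z_k† with diagonal unitaries Z_k. -/
theorem explicit_q_memory_useful
    (l : ℕ) (hl : 4 ≤ l)
    (v : Fin l → Fin 2 → ℂ)
    (hv : v = fun j =>
      ![if (j.val + 1) ≤ 4 then ((j.val + 1 : ℕ) : ℂ)⁻¹ else 1,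
        if (j.val + 1) ≤ 4 then
          Complex.I ^ (j.val + 1) * (↑(Real.sqrt (1 - 1 / ((j.val + 1 : ℕ) : ℝ) ^ 2)) : ℂ)
        else 0]) :
    (∀ j, ∑ k, v j k * star (v j k) = 1) ∧
    LinearIndependent ℂ
      (fun ts : Fin 2 × Fin 2 => (fun j => star (v j ts.1) * v j ts.2 : Fin l → ℂ)) ∧
    ¬ ∃ (N : ℕ) (P : Fin N → ℝ) (θ : Fin l → Fin N → ℝ),
        (∀ k, 0 ≤ P k) ∧ (∑ k, P k = 1) ∧
        (l : ℂ)⁻¹ • gram v =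
          ∑ k, (P k : ℂ) • (diagPhase θ k * plusMat l * (diagPhase θ k)ᴴ) := by
  -- the three sqrt constants
  set p : ℝ := Real.sqrt (1 - 1/(2:ℝ)^2) with hpdef
  set q : ℝ := Real.sqrt (1 - 1/(3:ℝ)^2) with hqdef
  set r : ℝ := Real.sqrt (1 - 1/(4:ℝ)^2) with hrdef
  have hp : 0 < p := Real.sqrt_pos.mpr (by norm_num)
  have hq : 0 < q := Real.sqrt_pos.mpr (by norm_num)
  have hr : 0 < r := Real.sqrt_pos.mpr (by norm_num)
  have hp2 : p * p = 3/4 := by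
    rw [hpdef, Real.mul_self_sqrt (by norm_num)]; norm_num
  have hq2 : q * q = 8/9 := by
    rw [hqdef, Real.mul_self_sqrt (by norm_num)]; norm_num
  have hr2 : r * r = 15/16 := by
    rw [hrdef, Real.mul_self_sqrt (by norm_num)]; norm_num
  -- the four special indices
  have h0l : (0:ℕ) < l := by omega
  have h1l : (1:ℕ) < l := by omega
  have h2l : (2:ℕ) < l := by omega
  have h3l : (3:ℕ) < l := by omega
  set j0 : Fin l := ⟨0, h0l⟩ with hj0
  set j1 : Fin l := ⟨1, h1l⟩ with hj1
  set j2 : Fin l := ⟨2, h2l⟩ with hj2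
  set j3 : Fin l := ⟨3, h3l⟩ with hj3
  -- values of v at special indices
  have hv00 : v j0 0 = 1 := by rw [hv]; norm_num [hj0]
  have hv01 : v j0 1 = 0 := by rw [hv]; norm_num [hj0]
  have hv10 : v j1 0 = 1/2 := by rw [hv]; norm_num [hj1]
  have hv11 : v j1 1 = -(p:ℂ) := by
    rw [hv]; norm_num [hj1, hpdef, pow_succ, Complex.I_mul_I]
  have hv20 : v j2 0 = 1/3 := by rw [hv]; norm_num [hj2]
  have hv21 : v j2 1 = -(Complex.I * (q:ℂ)) := by
    rw [hv]; norm_num [hj2, hqdef, pow_succ, Complex.I_mul_I]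
  have hv30 : v j3 0 = 1/4 := by rw [hv]; norm_num [hj3]
  have hv31 : v j3 1 = (r:ℂ) := by
    rw [hv]; norm_num [hj3, hrdef, pow_succ, Complex.I_mul_I]
  -- star values
  have sv00 : star (v j0 0) = 1 := by rw [hv00]; simp
  have sv01 : star (v j0 1) = 0 := by rw [hv01]; simp
  have sv10 : star (v j1 0) = 1/2 := by rw [hv10]; simp
  have sv11 : star (v j1 1) = -(p:ℂ) := by
    rw [hv11]; simp [Complex.star_def, Complex.conj_ofReal]
  have sv20 : star (v j2 0) = 1/3 := by rw [hv20]; simp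
  have sv21 : star (v j2 1) = Complex.I * (q:ℂ) := by
    rw [hv21]; simp [Complex.star_def, Complex.conj_ofReal, Complex.conj_I]
  have sv30 : star (v j3 0) = 1/4 := by rw [hv30]; simp
  have sv31 : star (v j3 1) = (r:ℂ) := by
    rw [hv31]; simp [Complex.star_def, Complex.conj_ofReal]
  refine ⟨?_, ?_, ?_⟩
  · -- normalization
    intro j
    rw [Fin.sum_univ_two, hv]
    simp only [Matrix.cons_val_zero, Matrix.cons_val_one, Matrix.head_cons]
    by_cases hj : j.val + 1 ≤ 4
    · rw [if_pos hj, if_pos hj]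
      set n : ℕ := j.val + 1 with hn
      have hn0 : (n:ℂ) ≠ 0 := Nat.cast_ne_zero.mpr (by omega)
      have hn1 : (1:ℝ) ≤ (n:ℝ) := by exact_mod_cast Nat.one_le_iff_ne_zero.mpr (by omega)
      have harg : (0:ℝ) ≤ 1 - 1/(n:ℝ)^2 := by
        have h1 : (1:ℝ) ≤ (n:ℝ)^2 := by nlinarith
        have h2 : 1/(n:ℝ)^2 ≤ 1 := by
          rw [div_le_one (by positivity)]; exact h1
        linarith
      have hs2 : (Real.sqrt (1 - 1/(n:ℝ)^2) : ℂ) * (Real.sqrt (1 - 1/(n:ℝ)^2) : ℂ)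
          = ((1 - 1/(n:ℝ)^2 : ℝ) : ℂ) := by
        rw [← Complex.ofReal_mul, Real.mul_self_sqrt harg]
      have key2 : Complex.I ^ n * (Real.sqrt (1 - 1/(n:ℝ)^2) : ℂ)
          * star (Complex.I ^ n * (Real.sqrt (1 - 1/(n:ℝ)^2) : ℂ))
          = ((1 - 1/(n:ℝ)^2 : ℝ) : ℂ) := by
        rw [star_mul', star_pow, Complex.star_def, Complex.conj_I, Complex.conj_ofReal]
        have hre : Complex.I ^ n * (Real.sqrt (1 - 1/(n:ℝ)^2) : ℂ)
              * ((-Complex.I) ^ n * (Real.sqrt (1 - 1/(n:ℝ)^2) : ℂ))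
            = (Complex.I * (-Complex.I)) ^ n *
              ((Real.sqrt (1 - 1/(n:ℝ)^2) : ℂ) * (Real.sqrt (1 - 1/(n:ℝ)^2) : ℂ)) := by
          rw [mul_pow]; ring
        rw [hre, hs2]
        simp [Complex.I_mul_I]
      rw [key2]
      have : star ((n:ℂ))⁻¹ = ((n:ℂ))⁻¹ := by simp
      rw [this]
      push_cast
      field_simp
      ring
    · rw [if_neg hj, if_neg hj]; simp
  · -- linear independence
    rw [Fintype.linearIndependent_iff]
    intro g hg
    have hEq := fun (i : Fin l) => congrFun hg i
    have Eq0 := hEq j0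
    have Eq1 := hEq j1
    have Eq2 := hEq j2
    have Eq3 := hEq j3
    simp only [Finset.sum_apply, Pi.smul_apply, smul_eq_mul, Pi.zero_apply,
      Fintype.sum_prod_type, Fin.sum_univ_two] at Eq0 Eq1 Eq2 Eq3
    rw [sv00, sv01, hv00, hv01] at Eq0
    rw [sv10, sv11, hv10, hv11] at Eq1
    rw [sv20, sv21, hv20, hv21] at Eq2
    rw [sv30, sv31, hv30, hv31] at Eq3
    have hp2C : (p:ℂ) * p = 3/4 := by
      have := congrArg (Complex.ofReal) hp2; push_cast at this; exact_mod_cast this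
    have hq2C : (q:ℂ) * q = 8/9 := by
      have := congrArg (Complex.ofReal) hq2; push_cast at this; exact_mod_cast this
    have hr2C : (r:ℂ) * r = 15/16 := by
      have := congrArg (Complex.ofReal) hr2; push_cast at this; exact_mod_cast this
    have hpC : (p:ℂ) ≠ 0 := by exact_mod_cast hp.ne'
    have hqC : (q:ℂ) ≠ 0 := by exact_mod_cast hq.ne'
    have hg00 : g (0,0) = 0 := by linear_combination Eq0
    have hg11 : g (1,1) = 0 := by
      have hcoef : ((3*(r:ℂ)/16 + 15*(p:ℂ)/32)) ≠ 0 := by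
        have h0 : ((3*r/16 + 15*p/32 : ℝ) : ℂ) ≠ 0 := by
          exact_mod_cast (by positivity : (0:ℝ) < 3*r/16 + 15*p/32).ne'
        convert h0 using 2 <;> push_cast <;> ring
      have h : ((3*(r:ℂ)/16 + 15*(p:ℂ)/32)) * g (1,1) = 0 := by
        linear_combination ((r:ℂ)/4)*Eq1 + ((p:ℂ)/2)*Eq3 - ((r:ℂ)/16 + (p:ℂ)/32)*hg00
          - ((r:ℂ)/4)*(g (1,1))*hp2C - ((p:ℂ)/2)*(g (1,1))*hr2C
      exact (mul_eq_zero.mp h).resolve_left hcoef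
    have hgS : g (0,1) + g (1,0) = 0 := by
      have h : (p:ℂ)/2 * (g (0,1) + g (1,0)) = 0 := by
        linear_combination (-1:ℂ)*Eq1 + (1/4:ℂ)*hg00 + ((p:ℂ)*(p:ℂ))*hg11
      have hne : (p:ℂ)/2 ≠ 0 := by simp [hpC]
      exact (mul_eq_zero.mp h).resolve_left hne
    have hgD : g (1,0) - g (0,1) = 0 := by
      have h : Complex.I * (q:ℂ)/3 * (g (1,0) - g (0,1)) = 0 := by
        linear_combination Eq2 - (1/9:ℂ)*hg00 - ((q:ℂ)*(q:ℂ))*hg11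
          + (g (1,1))*(q:ℂ)*(q:ℂ)*Complex.I_sq
      have hne : Complex.I * (q:ℂ)/3 ≠ 0 := by simp [hqC, Complex.I_ne_zero]
      exact (mul_eq_zero.mp h).resolve_left hne
    have hg01 : g (0,1) = 0 := by linear_combination (1/2:ℂ)*hgS - (1/2:ℂ)*hgD
    have hg10 : g (1,0) = 0 := by linear_combination (1/2:ℂ)*hgS + (1/2:ℂ)*hgD
    intro i
    fin_cases i
    · exact hg00
    · exact hg01
    · exact hg10
    · exact hg11
  · -- no probabilistic incoherent-unitary decomposition
    rintro ⟨N, P, θ, hP0, hP1, hEq⟩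
    have hl0 : (l:ℂ) ≠ 0 := Nat.cast_ne_zero.mpr (by omega)
    -- entry of the channel output
    have hprod : ∀ (k : Fin N) (i j : Fin l),
        (diagPhase θ k * plusMat l * (diagPhase θ k)ᴴ) i j
          = Complex.exp (Complex.I * θ i k) * (l:ℂ)⁻¹ *
            star (Complex.exp (Complex.I * θ j k)) := by
      intro k i j
      rw [diagPhase, Matrix.diagonal_conjTranspose, Matrix.mul_diagonal, Matrix.diagonal_mul]
      simp [plusMat]
    have hEntry : ∀ i j : Fin l, gram v i j
        = ∑ k, (P k:ℂ) * (Complex.exp (Complex.I * θ i k) *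
            star (Complex.exp (Complex.I * θ j k))) := by
      intro i j
      have h := congrFun (congrFun hEq i) j
      simp only [Matrix.smul_apply, Matrix.sum_apply, smul_eq_mul] at h
      rw [Finset.sum_congr rfl (fun k _ => by rw [hprod k i j])] at h
      calc gram v i j = (l:ℂ) * ((l:ℂ)⁻¹ * gram v i j) := by field_simp
        _ = (l:ℂ) * ∑ k, (P k:ℂ) * (Complex.exp (Complex.I * θ i k) * (l:ℂ)⁻¹ *
              star (Complex.exp (Complex.I * θ j k))) := by rw [h]
        _ = ∑ k, (P k:ℂ) * (Complex.exp (Complex.I * θ i k) *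
              star (Complex.exp (Complex.I * θ j k))) := by
            rw [Finset.mul_sum]
            refine Finset.sum_congr rfl fun k _ => ?_
            field_simp
    -- the four-index embedding
    set em : Fin 4 → Fin l := ![j0, j1, j2, j3] with hem
    -- gram entries at the special indices
    have hgram : ∀ i j : Fin l, gram v i j = v i 0 * star (v j 0) + v i 1 * star (v j 1) := by
      intro i j; simp [gram, Fin.sum_univ_two]
    -- key identity
    have key : ∀ d : Fin 4 → ℂ,
        (∑ t : Fin 2, (∑ m, d m * v (em m) t) * star (∑ m, d m * v (em m) t))
          = ∑ k, (P k:ℂ) * ((∑ m, d m * Complex.exp (Complex.I * θ (em m) k)) *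
              star (∑ m, d m * Complex.exp (Complex.I * θ (em m) k))) := by
      intro d
      rw [DQM_expand d (fun t m => v (em m) t)]
      have hRHS : (∑ k, (P k:ℂ) * ((∑ m, d m * Complex.exp (Complex.I * θ (em m) k)) *
            star (∑ m, d m * Complex.exp (Complex.I * θ (em m) k))))
          = ∑ m, ∑ m', (d m * star (d m')) * (∑ k, (P k:ℂ) *
              (Complex.exp (Complex.I * θ (em m) k) *
                star (Complex.exp (Complex.I * θ (em m') k)))) := by
        calc (∑ k, (P k:ℂ) * ((∑ m, d m * Complex.exp (Complex.I * θ (em m) k)) *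
              star (∑ m, d m * Complex.exp (Complex.I * θ (em m) k))))
            = ∑ k, ∑ m, ∑ m', (P k:ℂ) * ((d m * star (d m')) *
                (Complex.exp (Complex.I * θ (em m) k) *
                  star (Complex.exp (Complex.I * θ (em m') k)))) := by
              refine Finset.sum_congr rfl fun k _ => ?_
              rw [DQM_expand1 d (fun m => Complex.exp (Complex.I * θ (em m) k)), Finset.mul_sum]
              exact Finset.sum_congr rfl fun m _ => by rw [Finset.mul_sum]
          _ = ∑ m, ∑ k, ∑ m', (P k:ℂ) * ((d m * star (d m')) *
                (Complex.exp (Complex.I * θ (em m) k) *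
                  star (Complex.exp (Complex.I * θ (em m') k)))) := Finset.sum_comm
          _ = ∑ m, ∑ m', ∑ k, (P k:ℂ) * ((d m * star (d m')) *
                (Complex.exp (Complex.I * θ (em m) k) *
                  star (Complex.exp (Complex.I * θ (em m') k)))) :=
              Finset.sum_congr rfl fun m _ => Finset.sum_comm
          _ = ∑ m, ∑ m', (d m * star (d m')) * (∑ k, (P k:ℂ) *
                (Complex.exp (Complex.I * θ (em m) k) *
                  star (Complex.exp (Complex.I * θ (em m') k)))) := by
              refine Finset.sum_congr rfl fun m _ => Finset.sum_congr rfl fun m' _ => ?_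
              rw [Finset.mul_sum]
              exact Finset.sum_congr rfl fun k _ => by ring
      rw [hRHS]
      refine Finset.sum_congr rfl fun m _ => Finset.sum_congr rfl fun m' _ => ?_
      rw [← hEntry (em m) (em m'), hgram (em m) (em m'), Fin.sum_univ_two]
    -- positivity extraction
    obtain ⟨k0, hk0⟩ : ∃ k, 0 < P k := by
      by_contra h
      push_neg at h
      have h0 : ∑ k, P k = 0 :=
        le_antisymm (Finset.sum_nonpos fun k _ => h k) (Finset.sum_nonneg fun k _ => hP0 k)
      rw [hP1] at h0
      norm_num at h0
    have extract : ∀ S : Fin N → ℂ, (∑ k, (P k:ℂ) * (S k * star (S k))) = 0 → S k0 = 0 := by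
      intro S hsum
      have h1 : ∀ k : Fin N, (P k:ℂ) * (S k * star (S k))
          = ((P k * Complex.normSq (S k) : ℝ) : ℂ) := by
        intro k
        rw [Complex.star_def, Complex.mul_conj]
        push_cast
        ring
      rw [Finset.sum_congr rfl (fun k _ => h1 k), ← Complex.ofReal_sum] at hsum
      have h2 : ∑ k, P k * Complex.normSq (S k) = 0 := by exact_mod_cast hsum
      have h3 := (Finset.sum_eq_zero_iff_of_nonneg
        (fun k _ => mul_nonneg (hP0 k) (Complex.normSq_nonneg _))).mp h2 k0 (Finset.mem_univ k0)
      have h4 : Complex.normSq (S k0) = 0 := by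
        rcases mul_eq_zero.mp h3 with h | h
        · exact absurd h hk0.ne'
        · exact h
      exact Complex.normSq_eq_zero.mp h4
    -- unimodularity
    have hU : ∀ (i : Fin l),
        Complex.exp (Complex.I * θ i k0) * star (Complex.exp (Complex.I * θ i k0)) = 1 := by
      intro i
      have hstar : star (Complex.exp (Complex.I * θ i k0))
          = Complex.exp (-(Complex.I * θ i k0)) := by
        rw [Complex.star_def, ← Complex.exp_conj]
        congr 1
        simp [Complex.conj_I, Complex.conj_ofReal]
      rw [hstar, ← Complex.exp_add]
      simp
    -- the two coefficient vectors
    set d1 : Fin 4 → ℂ := ![(r:ℂ)/2 + (p:ℂ)/4, -(r:ℂ), 0, -(p:ℂ)] with hd1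
    set d2 : Fin 4 → ℂ := ![(p:ℂ)/3 - ((q:ℂ)/2) * Complex.I, (q:ℂ) * Complex.I, -(p:ℂ), 0]
      with hd2
    have hA10 : (∑ m, d1 m * v (em m) 0) = 0 := by
      simp only [Fin.sum_univ_four, hd1, hem, Matrix.cons_val_zero, Matrix.cons_val_one,
        Matrix.head_cons, Matrix.cons_val_two, Matrix.tail_cons, Matrix.cons_val_three]
      rw [hv00, hv10, hv20, hv30]; ring
    have hA11 : (∑ m, d1 m * v (em m) 1) = 0 := by
      simp only [Fin.sum_univ_four, hd1, hem, Matrix.cons_val_zero, Matrix.cons_val_one,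
        Matrix.head_cons, Matrix.cons_val_two, Matrix.tail_cons, Matrix.cons_val_three]
      rw [hv01, hv11, hv21, hv31]; ring
    have hA20 : (∑ m, d2 m * v (em m) 0) = 0 := by
      simp only [Fin.sum_univ_four, hd2, hem, Matrix.cons_val_zero, Matrix.cons_val_one,
        Matrix.head_cons, Matrix.cons_val_two, Matrix.tail_cons, Matrix.cons_val_three]
      rw [hv00, hv10, hv20, hv30]; ring
    have hA21 : (∑ m, d2 m * v (em m) 1) = 0 := by
      simp only [Fin.sum_univ_four, hd2, hem, Matrix.cons_val_zero, Matrix.cons_val_one,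
        Matrix.head_cons, Matrix.cons_val_two, Matrix.tail_cons, Matrix.cons_val_three]
      rw [hv01, hv11, hv21, hv31]; ring
    have hzero1 : (∑ k, (P k:ℂ) * ((∑ m, d1 m * Complex.exp (Complex.I * θ (em m) k)) *
        star (∑ m, d1 m * Complex.exp (Complex.I * θ (em m) k)))) = 0 := by
      rw [← key d1, Fin.sum_univ_two, hA10, hA11]; simp
    have hzero2 : (∑ k, (P k:ℂ) * ((∑ m, d2 m * Complex.exp (Complex.I * θ (em m) k)) *
        star (∑ m, d2 m * Complex.exp (Complex.I * θ (em m) k)))) = 0 := by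
      rw [← key d2, Fin.sum_univ_two, hA20, hA21]; simp
    have hS1 := extract _ hzero1
    have hS2 := extract _ hzero2
    simp only [Fin.sum_univ_four, hd1, hd2, hem, Matrix.cons_val_zero, Matrix.cons_val_one,
      Matrix.head_cons, Matrix.cons_val_two, Matrix.tail_cons, Matrix.cons_val_three]
      at hS1 hS2
    have E1 : ((r:ℂ)/2 + (p:ℂ)/4) * Complex.exp (Complex.I * θ j0 k0)
        - (r:ℂ) * Complex.exp (Complex.I * θ j1 k0)
        - (p:ℂ) * Complex.exp (Complex.I * θ j3 k0) = 0 := by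
      linear_combination hS1
    have E2 : ((p:ℂ)/3 - ((q:ℂ)/2) * Complex.I) * Complex.exp (Complex.I * θ j0 k0)
        + (q:ℂ) * Complex.I * Complex.exp (Complex.I * θ j1 k0)
        - (p:ℂ) * Complex.exp (Complex.I * θ j2 k0) = 0 := by
      linear_combination hS2
    exact DQM_endgame p q r hp hq hr hp2 hq2 hr2
      (Complex.exp (Complex.I * θ j0 k0)) (Complex.exp (Complex.I * θ j1 k0))
      (Complex.exp (Complex.I * θ j2 k0)) (Complex.exp (Complex.I * θ j3 k0))
      (hU j0) (hU j1) (hU j2) (hU j3) E1 E2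


end DenseCoding
end

section
/- Let p be a prime and n ≥ m ≥ 1. The number of m-dimensional subspaces of F_p^{2n} that are totally isotropic with respect to the standard symplectic form equals (p^{2n}-1)(p^{2(n-1)}-1)⋯(p^{2(n-m+1)}-1) / ((p^m-1)(p^{m-1}-1)⋯(p-1)). In particular, for m = n this equals (p^n+1)(p^{n-1}+1)⋯(p+1). -/
open scoped Matrix Kronecker ComplexOrder
open Matrix

namespace DenseCoding

variable {n : Type*}

/-- The number of m-dimensional totally isotropic subspaces of F_p^{2n} for the
standard symplectic form ⟨(a,b),(a',b')⟩ = a·b' - a'·b. -/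
noncomputable def isoCount (p n m : ℕ) : ℕ :=
  Nat.card {W : Submodule (ZMod p) ((Fin n → ZMod p) × (Fin n → ZMod p)) //
    Module.finrank (ZMod p) ↥W = m ∧
    ∀ x ∈ W, ∀ y ∈ W, dotProduct x.1 y.2 - dotProduct y.1 x.2 = 0}


section SymplecticCount

open Module Submodule LinearMap

variable {p n : ℕ}

/-- The standard symplectic form on `(Fin n → ZMod p) × (Fin n → ZMod p)`. -/
noncomputable def symplB (p n : ℕ) :
    LinearMap.BilinForm (ZMod p) ((Fin n → ZMod p) × (Fin n → ZMod p)) :=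
  LinearMap.mk₂ (ZMod p) (fun x y => x.1 ⬝ᵥ y.2 - y.1 ⬝ᵥ x.2)
    (fun x x' y => by
      simp only [Prod.fst_add, Prod.snd_add, add_dotProduct, dotProduct_add]
      ring)
    (fun c x y => by
      simp only [Prod.smul_fst, Prod.smul_snd, smul_dotProduct, dotProduct_smul,
        smul_eq_mul]
      ring)
    (fun x y y' => by
      simp only [Prod.fst_add, Prod.snd_add, add_dotProduct, dotProduct_add]
      ring)
    (fun c x y => by
      simp only [Prod.smul_fst, Prod.smul_snd, smul_dotProduct, dotProduct_smul,
        smul_eq_mul]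
      ring)

lemma symplB_apply (x y : (Fin n → ZMod p) × (Fin n → ZMod p)) :
    symplB p n x y = x.1 ⬝ᵥ y.2 - y.1 ⬝ᵥ x.2 := rfl

lemma symplB_skew (x y : (Fin n → ZMod p) × (Fin n → ZMod p)) :
    symplB p n x y = - symplB p n y x := by
  simp only [symplB_apply]; ring

lemma symplB_self (x : (Fin n → ZMod p) × (Fin n → ZMod p)) : symplB p n x x = 0 := by
  simp [symplB_apply]

lemma symplB_refl : (symplB p n).IsRefl := by
  intro x y h
  rw [symplB_skew, h, neg_zero]

lemma symplB_nondeg : (symplB p n).Nondegenerate := by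
  refine (LinearMap.IsRefl.nondegenerate_iff_separatingLeft (B := symplB p n)
    (fun x y h => symplB_refl x y h)).mpr ?_
  intro x hx
  have h1 : x.1 = 0 := by
    funext i
    simpa [symplB_apply, dotProduct_single, single_dotProduct] using
      hx (0, Pi.single i 1)
  have h2 : x.2 = 0 := by
    funext i
    have := hx (Pi.single i 1, 0)
    simp only [symplB_apply, dotProduct_zero, single_dotProduct, one_mul] at this
    simpa using this.symm
  exact Prod.ext h1 h2

lemma isotropic_span {ι : Type*} {v : ι → (Fin n → ZMod p) × (Fin n → ZMod p)}
    (h : ∀ i j, symplB p n (v i) (v j) = 0) {x y}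
    (hx : x ∈ span (ZMod p) (Set.range v)) (hy : y ∈ span (ZMod p) (Set.range v)) :
    symplB p n x y = 0 := by
  have h1 : ∀ j, ∀ x ∈ span (ZMod p) (Set.range v), symplB p n x (v j) = 0 := by
    intro j x hx
    induction hx using Submodule.span_induction with
    | mem z hz => obtain ⟨i, rfl⟩ := hz; exact h i j
    | zero => simp
    | add a b _ _ ha hb => simp [map_add, ha, hb]
    | smul c a _ ha => simp [_root_.map_smul, ha]
  induction hy using Submodule.span_induction with
  | mem z hz => obtain ⟨j, rfl⟩ := hz; exact h1 j x hx
  | zero => simp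
  | add a b _ _ ha hb => simp [map_add, ha, hb]
  | smul c a _ ha => simp [_root_.map_smul, ha]

lemma mem_orthogonal_span_iff {m : ℕ} (v : Fin m → (Fin n → ZMod p) × (Fin n → ZMod p))
    (x : (Fin n → ZMod p) × (Fin n → ZMod p)) :
    x ∈ (symplB p n).orthogonal (span (ZMod p) (Set.range v)) ↔
      ∀ i, symplB p n (v i) x = 0 := by
  constructor
  · intro hx i
    exact hx (v i) (Submodule.subset_span ⟨i, rfl⟩)
  · intro hx y hy
    induction hy using Submodule.span_induction with
    | mem z hz => obtain ⟨i, rfl⟩ := hz; exact hx i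
    | zero => simp [LinearMap.BilinForm.IsOrtho]
    | add a b _ _ ha hb =>
        simp only [LinearMap.BilinForm.IsOrtho, map_add, LinearMap.add_apply] at *
        simp [ha, hb]
    | smul c a _ ha =>
        simp only [LinearMap.BilinForm.IsOrtho, _root_.map_smul, LinearMap.smul_apply] at *
        simp [ha]

variable [Fact p.Prime]

lemma finrank_symplV : Module.finrank (ZMod p) ((Fin n → ZMod p) × (Fin n → ZMod p)) = 2 * n := by
  rw [Module.finrank_prod, Module.finrank_pi]
  simp [two_mul]

/-- The type of linearly independent isotropic `m`-tuples. -/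
def isoTuples (p n m : ℕ) : Type :=
  {v : Fin m → (Fin n → ZMod p) × (Fin n → ZMod p) //
    LinearIndependent (ZMod p) v ∧ ∀ i j, symplB p n (v i) (v j) = 0}

attribute [local instance] Fintype.ofFinite

instance {m : ℕ} : Finite (isoTuples p n m) := by
  unfold isoTuples; infer_instance

lemma card_submodule (W : Submodule (ZMod p) ((Fin n → ZMod p) × (Fin n → ZMod p))) :
    Nat.card W = p ^ Module.finrank (ZMod p) W := by
  rw [Nat.card_eq_fintype_card, card_eq_pow_finrank (K := ZMod p), ZMod.card]

set_option maxHeartbeats 1000000 in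
lemma step_count {m : ℕ} (v : Fin m → (Fin n → ZMod p) × (Fin n → ZMod p))
    (hv : LinearIndependent (ZMod p) v) (hiso : ∀ i j, symplB p n (v i) (v j) = 0) :
    Nat.card {x : (Fin n → ZMod p) × (Fin n → ZMod p) //
        x ∈ (symplB p n).orthogonal (span (ZMod p) (Set.range v)) ∧
          x ∉ span (ZMod p) (Set.range v)} = p ^ (2 * n - m) - p ^ m := by
  set W := span (ZMod p) (Set.range v)
  set O := (symplB p n).orthogonal W
  have hle : W ≤ O := by
    intro x hx y hy
    exact isotropic_span hiso hy hx
  have hWO : (W : Set ((Fin n → ZMod p) × (Fin n → ZMod p))) ⊆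
      (O : Set ((Fin n → ZMod p) × (Fin n → ZMod p))) := SetLike.coe_subset_coe.mpr hle
  have hfW : Module.finrank (ZMod p) W = m := by
    rw [finrank_span_eq_card hv, Fintype.card_fin]
  have hfO : Module.finrank (ZMod p) O = 2 * n - m := by
    rw [LinearMap.BilinForm.finrank_orthogonal symplB_nondeg, hfW, finrank_symplV]
  have e : {x : (Fin n → ZMod p) × (Fin n → ZMod p) // x ∈ O ∧ x ∉ W} ≃
      ((O : Set ((Fin n → ZMod p) × (Fin n → ZMod p))) \
        (W : Set ((Fin n → ZMod p) × (Fin n → ZMod p))) :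
        Set ((Fin n → ZMod p) × (Fin n → ZMod p))) :=
    Equiv.subtypeEquivRight fun x => Iff.rfl
  have eO : (O : Set ((Fin n → ZMod p) × (Fin n → ZMod p))).ncard = p ^ (2 * n - m) := by
    rw [← Nat.card_coe_set_eq,
      SetLike.coe_sort_coe, card_submodule, hfO]
  have eW : (W : Set ((Fin n → ZMod p) × (Fin n → ZMod p))).ncard = p ^ m := by
    rw [← Nat.card_coe_set_eq,
      SetLike.coe_sort_coe, card_submodule, hfW]
  rw [Nat.card_congr e, Nat.card_coe_set_eq, Set.ncard_diff hWO, eO, eW]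

lemma card_isoTuples (p n : ℕ) [Fact p.Prime] {m : ℕ} (hmn : m ≤ n) :
    Nat.card (isoTuples p n m) = ∏ i ∈ Finset.range m, (p ^ (2 * n - i) - p ^ i) := by
  induction m with
  | zero =>
      haveI : Unique (isoTuples p n 0) :=
        { default := ⟨fun i => i.elim0, linearIndependent_empty_type, fun i => i.elim0⟩
          uniq := fun a => Subtype.ext (funext fun i => i.elim0) }
      simp [Nat.card_unique]
  | succ m ih =>
      have hm : m ≤ n := le_trans (Nat.le_succ m) hmn
      -- the "forget the first vector" map
      set f : isoTuples p n (m + 1) → isoTuples p n m := fun v =>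
        ⟨Fin.tail v.1, (v.2.1.comp Fin.succ (Fin.succ_injective m)),
          fun i j => v.2.2 i.succ j.succ⟩ with hf
      have fibEquiv : ∀ w : isoTuples p n m,
          {u : isoTuples p n (m + 1) // f u = w} ≃
          {x : (Fin n → ZMod p) × (Fin n → ZMod p) //
            x ∈ (symplB p n).orthogonal (span (ZMod p) (Set.range w.1)) ∧
              x ∉ span (ZMod p) (Set.range w.1)} := by
        intro w
        refine
          { toFun := fun u => ⟨u.1.1 0, ?_, ?_⟩
            invFun := fun x => ⟨⟨Fin.cons x.1 w.1, ?_, ?_⟩, ?_⟩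
            left_inv := ?_
            right_inv := ?_ }
        · have htail : Fin.tail u.1.1 = w.1 := congrArg Subtype.val u.2
          rw [mem_orthogonal_span_iff]
          intro i
          rw [← htail]
          exact u.1.2.2 i.succ 0
        · have htail : Fin.tail u.1.1 = w.1 := congrArg Subtype.val u.2
          have hcons : LinearIndependent (ZMod p) (Fin.cons (u.1.1 0) (Fin.tail u.1.1) :
              Fin (m + 1) → _) := by
            rw [Fin.cons_self_tail]; exact u.1.2.1
          rw [← htail]
          exact (linearIndependent_fin_cons.mp hcons).2
        · exact linearIndependent_fin_cons.mpr ⟨w.2.1, x.2.2⟩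
        · intro i j
          refine Fin.cases ?_ ?_ i <;> [skip; intro i'] <;>
            refine Fin.cases ?_ ?_ j <;> try intro j'
          · simpa using symplB_self x.1
          · simp only [Fin.cons_zero, Fin.cons_succ]
            rw [symplB_skew]
            have := (mem_orthogonal_span_iff w.1 x.1).mp x.2.1 j'
            rw [this, neg_zero]
          · simp only [Fin.cons_zero, Fin.cons_succ]
            exact (mem_orthogonal_span_iff w.1 x.1).mp x.2.1 i'
          · simpa using w.2.2 i' j'
        · apply Subtype.ext
          rw [hf]
          have h : Fin.tail (Fin.cons x.1 w.1 : Fin (m + 1) → _) = w.1 := Fin.tail_cons _ _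
          exact h
        · intro u
          apply Subtype.ext
          apply Subtype.ext
          have htail : Fin.tail u.1.1 = w.1 := congrArg Subtype.val u.2
          show Fin.cons (u.1.1 0) w.1 = u.1.1
          rw [← htail, Fin.cons_self_tail]
        · intro x
          apply Subtype.ext
          have h : (Fin.cons x.1 w.1 : Fin (m + 1) → _) 0 = x.1 := Fin.cons_zero _ _
          exact h
      have hfib : ∀ w : isoTuples p n m,
          Nat.card {u : isoTuples p n (m + 1) // f u = w} = p ^ (2 * n - m) - p ^ m := by
        intro w
        rw [Nat.card_congr (fibEquiv w)]
        exact step_count w.1 w.2.1 w.2.2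
      have key : Nat.card (isoTuples p n (m + 1)) =
          Nat.card (isoTuples p n m) * (p ^ (2 * n - m) - p ^ m) := by
        have e : isoTuples p n (m + 1) ≃ Σ w : isoTuples p n m,
            {u : isoTuples p n (m + 1) // f u = w} :=
          (Equiv.sigmaFiberEquiv f).symm
        rw [Nat.card_congr e, Nat.card_eq_fintype_card, Fintype.card_sigma]
        have : ∀ w : isoTuples p n m,
            Fintype.card {u : isoTuples p n (m + 1) // f u = w} = p ^ (2 * n - m) - p ^ m := by
          intro w
          rw [← Nat.card_eq_fintype_card]
          exact hfib w
        simp only [this, Finset.sum_const, Finset.card_univ, smul_eq_mul,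
          Nat.card_eq_fintype_card]
      rw [key, ih hm, Finset.prod_range_succ]

/-- The subtype of isotropic `m`-dimensional subspaces, as in `isoCount`. -/
def isoSub (p n m : ℕ) : Type :=
  {W : Submodule (ZMod p) ((Fin n → ZMod p) × (Fin n → ZMod p)) //
    Module.finrank (ZMod p) ↥W = m ∧
    ∀ x ∈ W, ∀ y ∈ W, dotProduct x.1 y.2 - dotProduct y.1 x.2 = 0}

instance {m : ℕ} : Finite (isoSub p n m) := by
  haveI : Finite (Submodule (ZMod p) ((Fin n → ZMod p) × (Fin n → ZMod p))) :=
    Finite.of_injective (fun W : Submodule (ZMod p) ((Fin n → ZMod p) × (Fin n → ZMod p)) =>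
      (W : Set ((Fin n → ZMod p) × (Fin n → ZMod p)))) SetLike.coe_injective
  unfold isoSub
  infer_instance

lemma card_isoTuples_eq_isoSub (p n m : ℕ) [Fact p.Prime] :
    Nat.card (isoTuples p n m) =
      Nat.card (isoSub p n m) * ∏ i ∈ Finset.range m, (p ^ m - p ^ i) := by
  classical
  set g : isoTuples p n m → isoSub p n m := fun v =>
    ⟨span (ZMod p) (Set.range v.1),
      by rw [finrank_span_eq_card v.2.1, Fintype.card_fin],
      fun x hx y hy => isotropic_span v.2.2 hx hy⟩ with hg
  have fibEquiv : ∀ W : isoSub p n m,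
      {v : isoTuples p n m // g v = W} ≃
        {u : Fin m → ↥W.1 // LinearIndependent (ZMod p) u} := by
    intro W
    refine
      { toFun := fun v => ⟨fun i => ⟨v.1.1 i, ?_⟩, ?_⟩
        invFun := fun u => ⟨⟨fun i => (u.1 i : _), ?_, ?_⟩, ?_⟩
        left_inv := ?_
        right_inv := ?_ }
    · have hspan : span (ZMod p) (Set.range v.1.1) = W.1 := congrArg Subtype.val v.2
      rw [← hspan]
      exact Submodule.subset_span ⟨i, rfl⟩
    · apply LinearIndependent.of_comp W.1.subtype
      exact v.1.2.1
    · exact (u.2.map' W.1.subtype (Submodule.ker_subtype W.1))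
    · intro i j
      have hx : ((u.1 i : _) : (Fin n → ZMod p) × (Fin n → ZMod p)) ∈ W.1 := (u.1 i).2
      have hy : ((u.1 j : _) : (Fin n → ZMod p) × (Fin n → ZMod p)) ∈ W.1 := (u.1 j).2
      exact W.2.2 _ hx _ hy
    · apply Subtype.ext
      show span (ZMod p) (Set.range fun i => ((u.1 i : _) :
          (Fin n → ZMod p) × (Fin n → ZMod p))) = W.1
      have hle : span (ZMod p) (Set.range fun i => ((u.1 i : _) :
          (Fin n → ZMod p) × (Fin n → ZMod p))) ≤ W.1 := by
        rw [Submodule.span_le]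
        rintro _ ⟨i, rfl⟩
        exact (u.1 i).2
      refine Submodule.eq_of_le_of_finrank_eq hle ?_
      rw [W.2.1, finrank_span_eq_card (by
        exact (u.2.map' W.1.subtype (Submodule.ker_subtype W.1))), Fintype.card_fin]
    · intro v
      apply Subtype.ext
      apply Subtype.ext
      rfl
    · intro u
      apply Subtype.ext
      funext i
      apply Subtype.ext
      rfl
  have hfib : ∀ W : isoSub p n m,
      Nat.card {v : isoTuples p n m // g v = W} =
        ∏ i ∈ Finset.range m, (p ^ m - p ^ i) := by
    intro W
    rw [Nat.card_congr (fibEquiv W)]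
    have hk : m ≤ Module.finrank (ZMod p) ↥W.1 := le_of_eq W.2.1.symm
    rw [card_linearIndependent hk, ZMod.card, W.2.1]
    exact Fin.prod_univ_eq_prod_range (fun i => p ^ m - p ^ i) m
  have e : isoTuples p n m ≃ Σ W : isoSub p n m, {v : isoTuples p n m // g v = W} :=
    (Equiv.sigmaFiberEquiv g).symm
  rw [Nat.card_congr e, Nat.card_eq_fintype_card, Fintype.card_sigma]
  have : ∀ W : isoSub p n m, Fintype.card {v : isoTuples p n m // g v = W} =
      ∏ i ∈ Finset.range m, (p ^ m - p ^ i) := by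
    intro W
    rw [← Nat.card_eq_fintype_card]
    exact hfib W
  simp only [this, Finset.sum_const, Finset.card_univ, smul_eq_mul, Nat.card_eq_fintype_card]

end SymplecticCount

/-- the count of m-dimensional totally isotropic subspaces equals
(p^{2n}-1)(p^{2(n-1)}-1)⋯(p^{2(n-m+1)}-1) / ((p^m-1)⋯(p-1)); for m = n it equals
(p^n+1)(p^{n-1}+1)⋯(p+1). -/
theorem count_totally_isotropic (p n m : ℕ) (hp : p.Prime) (hm : 1 ≤ m) (hmn : m ≤ n) :
    (isoCount p n m * ∏ i ∈ Finset.range m, (p ^ (i + 1) - 1) =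
      ∏ i ∈ Finset.range m, (p ^ (2 * (n - i)) - 1)) ∧
    (m = n → isoCount p n m = ∏ i ∈ Finset.range n, (p ^ (i + 1) + 1)) := by
  haveI : Fact p.Prime := ⟨hp⟩
  have hp2 : 2 ≤ p := hp.two_le
  have hiso : isoCount p n m = Nat.card (isoSub p n m) := rfl
  -- main counting identity
  have E : Nat.card (isoSub p n m) * ∏ i ∈ Finset.range m, (p ^ m - p ^ i) =
      ∏ i ∈ Finset.range m, (p ^ (2 * n - i) - p ^ i) := by
    rw [← card_isoTuples_eq_isoSub, card_isoTuples p n hmn]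
  have hfact1 : ∀ i ∈ Finset.range m, p ^ m - p ^ i = p ^ i * (p ^ (m - i) - 1) := by
    intro i hi
    rw [Finset.mem_range] at hi
    rw [Nat.mul_sub, mul_one, ← pow_add]
    congr 2
    omega
  have hfact2 : ∀ i ∈ Finset.range m, p ^ (2 * n - i) - p ^ i =
      p ^ i * (p ^ (2 * (n - i)) - 1) := by
    intro i hi
    rw [Finset.mem_range] at hi
    rw [Nat.mul_sub, mul_one, ← pow_add]
    congr 2
    omega
  have hrefl : ∏ i ∈ Finset.range m, (p ^ (m - i) - 1) =
      ∏ i ∈ Finset.range m, (p ^ (i + 1) - 1) := by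
    rw [← Finset.prod_range_reflect (fun j => p ^ (j + 1) - 1) m]
    refine Finset.prod_congr rfl fun j hj => ?_
    rw [Finset.mem_range] at hj
    congr 2
    omega
  have E2 : Nat.card (isoSub p n m) *
      ((∏ i ∈ Finset.range m, p ^ i) * ∏ i ∈ Finset.range m, (p ^ (i + 1) - 1)) =
      (∏ i ∈ Finset.range m, p ^ i) * ∏ i ∈ Finset.range m, (p ^ (2 * (n - i)) - 1) := by
    calc Nat.card (isoSub p n m) *
          ((∏ i ∈ Finset.range m, p ^ i) * ∏ i ∈ Finset.range m, (p ^ (i + 1) - 1))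
        = Nat.card (isoSub p n m) *
          ((∏ i ∈ Finset.range m, p ^ i) * ∏ i ∈ Finset.range m, (p ^ (m - i) - 1)) := by
          rw [hrefl]
      _ = Nat.card (isoSub p n m) *
          ∏ i ∈ Finset.range m, (p ^ i * (p ^ (m - i) - 1)) := by
          rw [Finset.prod_mul_distrib]
      _ = Nat.card (isoSub p n m) * ∏ i ∈ Finset.range m, (p ^ m - p ^ i) := by
          rw [← Finset.prod_congr rfl hfact1]
      _ = ∏ i ∈ Finset.range m, (p ^ (2 * n - i) - p ^ i) := E
      _ = ∏ i ∈ Finset.range m, (p ^ i * (p ^ (2 * (n - i)) - 1)) :=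
          Finset.prod_congr rfl hfact2
      _ = (∏ i ∈ Finset.range m, p ^ i) * ∏ i ∈ Finset.range m, (p ^ (2 * (n - i)) - 1) :=
          Finset.prod_mul_distrib
  have hppos : 0 < ∏ i ∈ Finset.range m, p ^ i :=
    Finset.prod_pos fun i _ => pow_pos (by omega) i
  have goal1 : isoCount p n m * ∏ i ∈ Finset.range m, (p ^ (i + 1) - 1) =
      ∏ i ∈ Finset.range m, (p ^ (2 * (n - i)) - 1) := by
    rw [hiso]
    refine Nat.eq_of_mul_eq_mul_left hppos ?_
    calc (∏ i ∈ Finset.range m, p ^ i) *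
          (Nat.card (isoSub p n m) * ∏ i ∈ Finset.range m, (p ^ (i + 1) - 1))
        = Nat.card (isoSub p n m) *
          ((∏ i ∈ Finset.range m, p ^ i) * ∏ i ∈ Finset.range m, (p ^ (i + 1) - 1)) := by ring
      _ = (∏ i ∈ Finset.range m, p ^ i) * ∏ i ∈ Finset.range m, (p ^ (2 * (n - i)) - 1) := E2
  refine ⟨goal1, ?_⟩
  intro hmn'
  subst hmn'
  have hsplit : ∀ i ∈ Finset.range m, p ^ (2 * (m - i)) - 1 =
      (p ^ (m - i) - 1) * (p ^ (m - i) + 1) := by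
    intro i hi
    rw [Finset.mem_range] at hi
    have h1 : 1 ≤ p ^ (m - i) := Nat.one_le_pow _ _ (by omega)
    have h2 : p ^ (2 * (m - i)) = p ^ (m - i) * p ^ (m - i) := by
      rw [← pow_add]; congr 1; omega
    set a := p ^ (m - i)
    have : (a - 1) * (a + 1) = a * a - 1 := by
      cases a with
      | zero => omega
      | succ b => simp [Nat.succ_sub_one]; ring_nf; omega
    rw [h2, ← this]
  have hrefl2 : ∏ i ∈ Finset.range m, (p ^ (m - i) + 1) =
      ∏ i ∈ Finset.range m, (p ^ (i + 1) + 1) := by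
    rw [← Finset.prod_range_reflect (fun j => p ^ (j + 1) + 1) m]
    refine Finset.prod_congr rfl fun j hj => ?_
    rw [Finset.mem_range] at hj
    congr 2
    omega
  have hApos : 0 < ∏ i ∈ Finset.range m, (p ^ (i + 1) - 1) := by
    refine Finset.prod_pos fun i _ => ?_
    have : 2 ≤ p ^ (i + 1) := le_trans hp2 (Nat.le_self_pow (by omega) p)
    omega
  refine Nat.eq_of_mul_eq_mul_right hApos ?_
  calc isoCount p m m * ∏ i ∈ Finset.range m, (p ^ (i + 1) - 1)
      = ∏ i ∈ Finset.range m, (p ^ (2 * (m - i)) - 1) := goal1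
    _ = ∏ i ∈ Finset.range m, ((p ^ (m - i) - 1) * (p ^ (m - i) + 1)) :=
        Finset.prod_congr rfl hsplit
    _ = (∏ i ∈ Finset.range m, (p ^ (m - i) - 1)) *
        ∏ i ∈ Finset.range m, (p ^ (m - i) + 1) := Finset.prod_mul_distrib
    _ = (∏ i ∈ Finset.range m, (p ^ (i + 1) + 1)) *
        ∏ i ∈ Finset.range m, (p ^ (i + 1) - 1) := by
        rw [hrefl, hrefl2]; ring

end DenseCoding
end
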